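/- arXiv:2402.18079 — 11 statements merged into one kernel-verified Lean document; each statement's English description precedes it below -/
import Mathlib

section
/- Let n ≥ 2 and let φ₁,…,φ_n ∈ ℂ be pairwise distinct. Define the (n+1)×(n+1) complex matrix M(φ) by: M_{1,1} = 1, M_{1,c} = 0 for 2 ≤ c ≤ n+1, M_{r,1} = e_{r−1}(φ) for 2 ≤ r ≤ n+1, and M_{r,c} = e_{r−2}(φ^{(c−1)}) for 2 ≤ r, c ≤ n+1. Then M(φ) is invertible and its inverse N satisfies: N_{1,1} = 1, N_{1,c} = 0 for 2 ≤ c ≤ n+1, and N_{i+1,j} = (−1)^{j} · φ_i^{n+1−j} / ∏_{k≠i}(φ_i − φ_k) for 1 ≤ i ≤ n and 1 ≤ j ≤ n+1. -/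
open Finset


lemma vieta_eval (s : Multiset ℂ) (x : ℂ) :
    (s.map (fun z => x - z)).prod
      = ∑ c ∈ Finset.range (Multiset.card s + 1),
          (-1) ^ c * s.esymm c * x ^ (Multiset.card s - c) := by
  have h := congrArg (Polynomial.eval x) (Multiset.prod_X_sub_X_eq_sum_esymm s)
  simpa [Polynomial.eval_multiset_prod, Multiset.map_map, Function.comp,
    Polynomial.eval_finset_sum, mul_assoc] using h

lemma vieta_finset {n : ℕ} (s : Finset (Fin n)) (φ : Fin n → ℂ) (x : ℂ) :
    ∏ k ∈ s, (x - φ k)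
      = ∑ c ∈ Finset.range (s.card + 1),
          (-1) ^ c * (s.val.map φ).esymm c * x ^ (s.card - c) := by
  have h := vieta_eval (s.val.map φ) x
  rw [Multiset.map_map, Multiset.card_map] at h
  exact h

/-- The matrix `M(φ)` built from elementary symmetric polynomials of `φ` (and of `φ` with
one entry removed) is invertible, with explicit inverse entries
`N_{i+1,j} = (−1)^j φ_i^{n+1−j} / ∏_{k≠i}(φ_i − φ_k)` (in `1`-indexed notation). -/
theorem matrix_M_inverse (n : ℕ) (hn : 2 ≤ n) (φ : Fin n → ℂ) (hφ : Function.Injective φ)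
    (M : Matrix (Fin (n + 1)) (Fin (n + 1)) ℂ)
    (hM00 : M 0 0 = 1)
    (hM0c : ∀ c : Fin (n + 1), c ≠ 0 → M 0 c = 0)
    (hMr0 : ∀ i : Fin n, M i.succ 0 = (univ.val.map φ).esymm (i.val + 1))
    (hMrc : ∀ i c : Fin n, M i.succ c.succ = ((univ.erase c).val.map φ).esymm i.val) :
    IsUnit M
    ∧ M⁻¹ 0 0 = 1
    ∧ (∀ c : Fin (n + 1), c ≠ 0 → M⁻¹ 0 c = 0)
    ∧ (∀ (i : Fin n) (j : Fin (n + 1)),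
        M⁻¹ i.succ j = (-1) ^ (j.val + 1) * (φ i) ^ (n - j.val)
          / ∏ k ∈ univ.erase i, (φ i - φ k)) := by
  have hD : ∀ i : Fin n, ∏ k ∈ univ.erase i, (φ i - φ k) ≠ 0 := by
    intro i
    refine Finset.prod_ne_zero_iff.2 fun k hk => sub_ne_zero.2 fun h => ?_
    exact (Finset.mem_erase.1 hk).1 (hφ h).symm
  set N : Matrix (Fin (n + 1)) (Fin (n + 1)) ℂ :=
    Matrix.of (fun r j => Fin.cases (if j = 0 then 1 else 0)
      (fun i => (-1) ^ (j.val + 1) * (φ i) ^ (n - j.val)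
          / ∏ k ∈ univ.erase i, (φ i - φ k)) r) with hN
  have hN0 : ∀ j : Fin (n + 1), N 0 j = if j = 0 then 1 else 0 := fun j => rfl
  have hNi : ∀ (i : Fin n) (j : Fin (n + 1)),
      N i.succ j = (-1) ^ (j.val + 1) * (φ i) ^ (n - j.val)
        / ∏ k ∈ univ.erase i, (φ i - φ k) := fun i j => rfl
  have hNM : N * M = 1 := by
    ext r j
    rw [Matrix.mul_apply, Fin.sum_univ_succ]
    refine Fin.cases ?_ ?_ r
    · -- row 0
      have hz : ∀ c : Fin n, N 0 c.succ = (0 : ℂ) := fun c => by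
        rw [hN0, if_neg (Fin.succ_ne_zero c)]
      simp only [hN0, if_pos rfl, one_mul, hz, zero_mul, Finset.sum_const_zero, add_zero]
      by_cases hj : j = 0
      · subst hj; rw [hM00, Matrix.one_apply_eq]; simp [Fin.succ_ne_zero]
      · rw [hM0c j hj, Matrix.one_apply_ne (Ne.symm hj)]; simp [Fin.succ_ne_zero]
    · intro i
      refine Fin.cases ?_ ?_ j
      · -- column 0
        rw [hM00, hNi, mul_one, Matrix.one_apply_ne (Fin.succ_ne_zero i)]
        have hterm : ∀ c : Fin n, N i.succ c.succ * M c.succ 0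
            = -((-1) ^ (c.val + 1) * (univ.val.map φ).esymm (c.val + 1)
                * φ i ^ (n - (c.val + 1)))
              / ∏ k ∈ univ.erase i, (φ i - φ k) := by
          intro c
          rw [hNi, hMr0]
          have hcs : ((c.succ : Fin (n + 1)) : ℕ) = c.val + 1 := rfl
          rw [hcs, pow_succ]
          ring
        rw [Finset.sum_congr rfl (fun c _ => hterm c),
          Fin.sum_univ_eq_sum_range (fun c =>
            -((-1) ^ (c + 1) * (univ.val.map φ).esymm (c + 1) * φ i ^ (n - (c + 1)))
              / ∏ k ∈ univ.erase i, (φ i - φ k))]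
        have hv : (0 : ℂ) = ∑ c ∈ Finset.range (n + 1),
            (-1) ^ c * (univ.val.map φ).esymm c * φ i ^ (n - c) := by
          have h := vieta_finset (univ : Finset (Fin n)) φ (φ i)
          rw [Finset.card_univ, Fintype.card_fin] at h
          rw [← h]
          exact (Finset.prod_eq_zero (mem_univ i) (sub_self (φ i))).symm
        rw [Finset.sum_range_succ'] at hv
        have hs : ∑ c ∈ Finset.range n,
            (-1) ^ (c + 1) * (univ.val.map φ).esymm (c + 1) * φ i ^ (n - (c + 1))
            = -(φ i ^ n) := by
          have h0 : (-1 : ℂ) ^ 0 * (univ.val.map φ).esymm 0 * φ i ^ (n - 0) = φ i ^ n := by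
            simp [Multiset.esymm]
          rw [h0] at hv
          exact eq_neg_of_add_eq_zero_left hv.symm
        rw [← Finset.sum_div, Finset.sum_neg_distrib, hs]
        simp only [Fin.val_zero, pow_one, Nat.sub_zero, neg_neg]
        ring
      · -- column j'.succ
        intro j'
        rw [hM0c j'.succ (Fin.succ_ne_zero j'), mul_zero, zero_add]
        have hterm : ∀ c : Fin n, N i.succ c.succ * M c.succ j'.succ
            = ((-1) ^ c.val * ((univ.erase j').val.map φ).esymm c.val
                * φ i ^ (n - 1 - c.val))
              / ∏ k ∈ univ.erase i, (φ i - φ k) := by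
          intro c
          rw [hNi, hMrc]
          have hcs : ((c.succ : Fin (n + 1)) : ℕ) = c.val + 1 := rfl
          have he : n - (c.val + 1) = n - 1 - c.val := by omega
          rw [hcs, he, pow_succ, pow_succ]
          ring
        rw [Finset.sum_congr rfl (fun c _ => hterm c),
          Fin.sum_univ_eq_sum_range (fun c =>
            ((-1) ^ c * ((univ.erase j').val.map φ).esymm c * φ i ^ (n - 1 - c))
              / ∏ k ∈ univ.erase i, (φ i - φ k)), ← Finset.sum_div]
        have hv : ∏ k ∈ univ.erase j', (φ i - φ k)
            = ∑ c ∈ Finset.range n,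
              (-1) ^ c * ((univ.erase j').val.map φ).esymm c * φ i ^ (n - 1 - c) := by
          have h := vieta_finset (univ.erase j') φ (φ i)
          have hcard : (univ.erase j').card = n - 1 := by
            rw [Finset.card_erase_of_mem (mem_univ j'), Finset.card_univ, Fintype.card_fin]
          rw [hcard, Nat.sub_add_cancel (by omega : 1 ≤ n)] at h
          exact h
        rw [← hv]
        by_cases hij : i = j'
        · subst hij
          rw [div_self (hD i), Matrix.one_apply_eq]
        · have : ∏ k ∈ univ.erase j', (φ i - φ k) = 0 :=
            Finset.prod_eq_zero (Finset.mem_erase.2 ⟨hij, mem_univ i⟩) (sub_self _)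
          rw [this, zero_div, Matrix.one_apply_ne (by
            simpa [Fin.succ_inj] using hij)]
  have hinv : M⁻¹ = N := Matrix.inv_eq_left_inv hNM
  refine ⟨(Matrix.isUnit_iff_isUnit_det M).2 (Matrix.isUnit_det_of_left_inverse hNM), ?_, ?_, ?_⟩
  · rw [hinv]; exact hN0 0 |>.trans (if_pos rfl)
  · intro c hc; rw [hinv]; exact (hN0 c).trans (if_neg hc)
  · intro i j; rw [hinv]; exact hNi i j
end

section
/- Let n ≥ 1 and let a₁,…,a_{n+1} ∈ ℂ be pairwise distinct. Let x_k, y_k : ℂ → ℂ (1 ≤ k ≤ n+1) be holomorphic and satisfy the complexified Neumann system: x_k′(τ) = y_k(τ), y_k′(τ) = −(Γ(τ) + a_k) x_k(τ) with Γ(τ) = ∑_{i=1}^{n+1}(y_i(τ)² − a_i x_i(τ)²), together with ∑_k x_k(τ)² ≡ 1 and ∑_k x_k(τ) y_k(τ) ≡ 0. For t ∈ ℝ let U(t,ξ), V(t,ξ), W(t,ξ) be the Moser polynomials 𝐔(ξ), 𝐕(ξ), 𝐖(ξ) built from the vectors x(−√−1·t), y(−√−1·t) (the imaginary-time substitution τ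 = −√−1·t). Then for every ξ ∈ ℂ and every t ∈ ℝ: ∂ₜU(t,ξ) = −2V(t,ξ), ∂ₜV(t,ξ) = −(ξ + w₁(t) − u₁(t))U(t,ξ) + W(t,ξ), and ∂ₜW(t,ξ) = 2(ξ + w₁(t) − u₁(t))V(t,ξ), where u₁(t) is the coefficient of ξ^{n−1} in U(t,ξ) and w₁(t) the coefficient of ξⁿ in W(t,ξ); i.e. the Moser transform of a Neumann solution solves the Neumann–Moser system. -/
open Polynomial Finset

lemma moser_eval_sum {m : ℕ} (ξ : ℂ) (a z : Fin m → ℂ) :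
    (∑ j, C (z j) * ∏ k ∈ univ.erase j, (X - C (a k))).eval ξ
      = ∑ j, z j * ∏ k ∈ univ.erase j, (ξ - a k) := by
  simp [eval_finset_sum, eval_prod]

lemma moser_coeff_top (n : ℕ) (a z : Fin (n+1) → ℂ) :
    (∑ j, C (z j) * ∏ k ∈ univ.erase j, (X - C (a k))).coeff n = ∑ j, z j := by
  rw [finset_sum_coeff]
  refine Finset.sum_congr rfl fun j _ => ?_
  rw [coeff_C_mul]
  have hm : (∏ k ∈ univ.erase j, (X - C (a k))).Monic :=
    monic_prod_of_monic _ _ fun k _ => monic_X_sub_C _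
  have hd : (∏ k ∈ univ.erase j, (X - C (a k))).natDegree = n := by
    rw [natDegree_prod_of_monic _ _ fun k _ => monic_X_sub_C _]
    simp [natDegree_X_sub_C, Finset.card_erase_of_mem]
  have h1 := hm.coeff_natDegree
  rw [hd] at h1
  rw [h1, mul_one]

lemma moser_coeff_next (n : ℕ) (hn : 1 ≤ n) (a z : Fin (n+1) → ℂ) :
    (∑ j, C (z j) * ∏ k ∈ univ.erase j, (X - C (a k))).coeff (n-1)
      = ∑ j, z j * (a j - ∑ k, a k) := by
  rw [finset_sum_coeff]
  refine Finset.sum_congr rfl fun j _ => ?_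
  rw [coeff_C_mul]
  have hcard : #(univ.erase j) = n := by
    simp [Finset.card_erase_of_mem]
  have hpos : 0 < #(univ.erase j) := by omega
  have h := prod_X_sub_C_coeff_card_pred (univ.erase j) a hpos
  rw [hcard] at h
  rw [h, Finset.sum_erase_eq_sub (mem_univ j)]
  ring

lemma moser_sq_deriv {f : ℂ → ℂ} {f' : ℂ} {σ : ℂ} (hf : HasDerivAt f f' σ) (c : ℂ) :
    HasDerivAt (fun σ => (f σ)^2 * c) ((2 * f σ * f') * c) σ := by
  have := (hf.pow 2).mul_const c
  refine this.congr_deriv ?_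
  push_cast
  ring

/-- The Moser transform of a (holomorphic) solution of the complexified Neumann system,
taken in imaginary time `τ = −√−1·t`, solves the Neumann–Moser system. -/
theorem moser_transform_solves_neumann_moser (n : ℕ) (hn : 1 ≤ n)
    (a : Fin (n + 1) → ℂ) (ha : Function.Injective a)
    (x y : Fin (n + 1) → ℂ → ℂ)
    (hxdiff : ∀ k, Differentiable ℂ (x k)) (hydiff : ∀ k, Differentiable ℂ (y k))
    (Γ : ℂ → ℂ) (hΓ : ∀ τ, Γ τ = ∑ i, ((y i τ) ^ 2 - a i * (x i τ) ^ 2))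
    (hx' : ∀ k τ, deriv (x k) τ = y k τ)
    (hy' : ∀ k τ, deriv (y k) τ = -(Γ τ + a k) * x k τ)
    (hc1 : ∀ τ, ∑ k, (x k τ) ^ 2 = 1) (hc2 : ∀ τ, ∑ k, x k τ * y k τ = 0)
    (U V W : ℝ → Polynomial ℂ)
    (hU : ∀ t : ℝ, U t = ∑ j, C ((x j (-Complex.I * (t : ℂ))) ^ 2)
        * ∏ k ∈ univ.erase j, (X - C (a k)))
    (hV : ∀ t : ℝ, V t = C Complex.I * ∑ j,
        C (x j (-Complex.I * (t : ℂ)) * y j (-Complex.I * (t : ℂ)))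
          * ∏ k ∈ univ.erase j, (X - C (a k)))
    (hW : ∀ t : ℝ, W t = (∏ j, (X - C (a j))) + ∑ j, C ((y j (-Complex.I * (t : ℂ))) ^ 2)
        * ∏ k ∈ univ.erase j, (X - C (a k))) :
    ∀ (ξ : ℂ) (t : ℝ),
      deriv (fun s : ℝ => (U s).eval ξ) t = -2 * (V t).eval ξ
      ∧ deriv (fun s : ℝ => (V s).eval ξ) t
          = -(ξ + (W t).coeff n - (U t).coeff (n - 1)) * (U t).eval ξ + (W t).eval ξ
      ∧ deriv (fun s : ℝ => (W s).eval ξ) t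
          = 2 * (ξ + (W t).coeff n - (U t).coeff (n - 1)) * (V t).eval ξ := by
  intro ξ t
  have hxD : ∀ j τ, HasDerivAt (x j) (y j τ) τ := by
    intro j τ
    have h := ((hxdiff j) τ).hasDerivAt
    rwa [hx' j τ] at h
  have hyD : ∀ j τ, HasDerivAt (y j) (-(Γ τ + a j) * x j τ) τ := by
    intro j τ
    have h := ((hydiff j) τ).hasDerivAt
    rwa [hy' j τ] at h
  set c : Fin (n+1) → ℂ := fun j => ∏ k ∈ univ.erase j, (ξ - a k) with hcdef
  set F : ℂ := ∏ k, (ξ - a k) with hFdef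
  have hkey : ∀ j, a j * c j = ξ * c j - F := by
    intro j
    have h1 : F = (ξ - a j) * c j := (Finset.mul_prod_erase univ _ (mem_univ j)).symm
    rw [h1]; ring
  set τ0 : ℂ := -Complex.I * (t : ℂ) with hτ0
  -- evaluation formulas
  have hUe : ∀ s : ℝ, (U s).eval ξ = ∑ j, (x j (-Complex.I * (s:ℂ)))^2 * c j := by
    intro s
    rw [hU s, moser_eval_sum]
  have hVe : ∀ s : ℝ, (V s).eval ξ
      = Complex.I * ∑ j, (x j (-Complex.I * (s:ℂ)) * y j (-Complex.I * (s:ℂ))) * c j := by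
    intro s
    rw [hV s, eval_mul, eval_C, moser_eval_sum]
  have hWe : ∀ s : ℝ, (W s).eval ξ = F + ∑ j, (y j (-Complex.I * (s:ℂ)))^2 * c j := by
    intro s
    rw [hW s, eval_add, eval_prod, moser_eval_sum]
    simp [hFdef]
    rfl
  -- the linear inner map
  have hlin : HasDerivAt (fun σ : ℂ => -Complex.I * σ) (-Complex.I) (t : ℂ) := by
    simpa using (hasDerivAt_id (t:ℂ)).const_mul (-Complex.I)
  -- coefficient identities
  have hWc : (W t).coeff n = (∑ j, (y j τ0)^2) - ∑ k, a k := by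
    rw [hW t, coeff_add, moser_coeff_top]
    have hpos : 0 < #(univ : Finset (Fin (n+1))) := by simp
    have h := prod_X_sub_C_coeff_card_pred (univ : Finset (Fin (n+1))) a hpos
    have hcard : #(univ : Finset (Fin (n+1))) = n + 1 := by simp
    rw [hcard] at h
    simp only [Nat.add_sub_cancel] at h
    rw [h]; ring
  have hUc : (U t).coeff (n-1) = (∑ j, a j * (x j τ0)^2) - ∑ k, a k := by
    rw [hU t, moser_coeff_next n hn]
    have h2 : ∑ j, (x j τ0)^2 * (a j - ∑ k, a k)
        = (∑ j, a j * (x j τ0)^2) - (∑ j, (x j τ0)^2) * (∑ k, a k) := by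
      rw [Finset.sum_mul, ← Finset.sum_sub_distrib]
      exact Finset.sum_congr rfl fun j _ => by ring
    rw [h2, hc1 τ0, one_mul]
  have hΓ0 : ξ + (W t).coeff n - (U t).coeff (n-1) = ξ + Γ τ0 := by
    rw [hWc, hUc, hΓ τ0, Finset.sum_sub_distrib]
    ring
  refine ⟨?_, ?_, ?_⟩
  · -- first equation
    have hg : ∀ σ : ℂ, HasDerivAt (fun σ : ℂ => ∑ j, (x j σ)^2 * c j)
        (∑ j, (2 * x j σ * y j σ) * c j) σ := by
      intro σ
      exact HasDerivAt.fun_sum fun j _ => moser_sq_deriv (hxD j σ) (c j)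
    have hcomp : HasDerivAt (fun σ : ℂ => ∑ j, (x j (-Complex.I * σ))^2 * c j)
        ((∑ j, (2 * x j τ0 * y j τ0) * c j) * (-Complex.I)) (t : ℂ) := by
      have h := HasDerivAt.comp (t : ℂ) (hg τ0) hlin
      simpa [Function.comp_def, hτ0] using h
    have hfun : (fun s : ℝ => (U s).eval ξ)
        = fun s : ℝ => ∑ j, (x j (-Complex.I * (s:ℂ)))^2 * c j := funext hUe
    rw [hfun, hcomp.comp_ofReal.deriv, hVe t]
    rw [Finset.sum_mul, Finset.mul_sum, Finset.mul_sum]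
    exact Finset.sum_congr rfl fun j _ => by ring
  · -- second equation
    have hg : ∀ σ : ℂ, HasDerivAt
        (fun σ : ℂ => Complex.I * ∑ j, (x j σ * y j σ) * c j)
        (Complex.I * ∑ j, (y j σ * y j σ + x j σ * (-(Γ σ + a j) * x j σ)) * c j) σ := by
      intro σ
      exact (HasDerivAt.fun_sum fun j _ => ((hxD j σ).mul (hyD j σ)).mul_const (c j)).const_mul _
    have hcomp : HasDerivAt
        (fun σ : ℂ => Complex.I * ∑ j, (x j (-Complex.I * σ) * y j (-Complex.I * σ)) * c j)
        ((Complex.I * ∑ j, (y j τ0 * y j τ0 + x j τ0 * (-(Γ τ0 + a j) * x j τ0)) * c j)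
          * (-Complex.I)) (t : ℂ) := by
      have h := HasDerivAt.comp (t : ℂ) (hg τ0) hlin
      simpa [Function.comp_def, hτ0] using h
    have hfun : (fun s : ℝ => (V s).eval ξ)
        = fun s : ℝ => Complex.I
          * ∑ j, (x j (-Complex.I * (s:ℂ)) * y j (-Complex.I * (s:ℂ))) * c j := funext hVe
    rw [hfun, hcomp.comp_ofReal.deriv, hΓ0, hUe t, hWe t]
    -- now pure algebra with sums
    have hSXA : ∑ j, a j * ((x j τ0)^2 * c j) = ξ * (∑ j, (x j τ0)^2 * c j) - F := by
      calc ∑ j, a j * ((x j τ0)^2 * c j)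
          = ∑ j, (ξ * ((x j τ0)^2 * c j) - F * (x j τ0)^2) :=
            Finset.sum_congr rfl fun j _ => by linear_combination ((x j τ0)^2) * hkey j
        _ = ξ * (∑ j, (x j τ0)^2 * c j) - F * ∑ j, (x j τ0)^2 := by
            rw [Finset.sum_sub_distrib, Finset.mul_sum, Finset.mul_sum]
        _ = ξ * (∑ j, (x j τ0)^2 * c j) - F := by rw [hc1 τ0, mul_one]
    have hsum : ∑ j, (y j τ0 * y j τ0 + x j τ0 * (-(Γ τ0 + a j) * x j τ0)) * c j
        = (∑ j, (y j τ0)^2 * c j) - Γ τ0 * (∑ j, (x j τ0)^2 * c j)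
          - (ξ * (∑ j, (x j τ0)^2 * c j) - F) := by
      rw [← hSXA]
      calc ∑ j, (y j τ0 * y j τ0 + x j τ0 * (-(Γ τ0 + a j) * x j τ0)) * c j
          = ∑ j, ((y j τ0)^2 * c j - Γ τ0 * ((x j τ0)^2 * c j)
              - a j * ((x j τ0)^2 * c j)) := Finset.sum_congr rfl fun j _ => by ring
        _ = _ := by
            rw [Finset.sum_sub_distrib, Finset.sum_sub_distrib, Finset.mul_sum]
    rw [hsum]
    have hI := Complex.I_mul_I
    linear_combination (-((∑ j, (y j τ0)^2 * c j) - Γ τ0 * (∑ j, (x j τ0)^2 * c j)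
      - (ξ * (∑ j, (x j τ0)^2 * c j) - F))) * hI
  · -- third equation
    have hg : ∀ σ : ℂ, HasDerivAt (fun σ : ℂ => F + ∑ j, (y j σ)^2 * c j)
        (∑ j, (2 * y j σ * (-(Γ σ + a j) * x j σ)) * c j) σ := by
      intro σ
      exact (HasDerivAt.fun_sum fun j _ => moser_sq_deriv (hyD j σ) (c j)).const_add F
    have hcomp : HasDerivAt (fun σ : ℂ => F + ∑ j, (y j (-Complex.I * σ))^2 * c j)
        ((∑ j, (2 * y j τ0 * (-(Γ τ0 + a j) * x j τ0)) * c j) * (-Complex.I)) (t : ℂ) := by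
      have h := HasDerivAt.comp (t : ℂ) (hg τ0) hlin
      simpa [Function.comp_def, hτ0] using h
    have hfun : (fun s : ℝ => (W s).eval ξ)
        = fun s : ℝ => F + ∑ j, (y j (-Complex.I * (s:ℂ)))^2 * c j := funext hWe
    rw [hfun, hcomp.comp_ofReal.deriv, hΓ0, hVe t]
    have hSXY : ∑ j, a j * ((x j τ0 * y j τ0) * c j)
        = ξ * ∑ j, (x j τ0 * y j τ0) * c j := by
      calc ∑ j, a j * ((x j τ0 * y j τ0) * c j)
          = ∑ j, (ξ * ((x j τ0 * y j τ0) * c j) - F * (x j τ0 * y j τ0)) :=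
            Finset.sum_congr rfl fun j _ => by linear_combination (x j τ0 * y j τ0) * hkey j
        _ = ξ * (∑ j, (x j τ0 * y j τ0) * c j) - F * ∑ j, x j τ0 * y j τ0 := by
            rw [Finset.sum_sub_distrib, Finset.mul_sum, Finset.mul_sum]
        _ = _ := by rw [hc2 τ0, mul_zero, sub_zero]
    have hsum : ∑ j, (2 * y j τ0 * (-(Γ τ0 + a j) * x j τ0)) * c j
        = -2 * Γ τ0 * (∑ j, (x j τ0 * y j τ0) * c j)
          - 2 * (ξ * ∑ j, (x j τ0 * y j τ0) * c j) := by
      rw [← hSXY]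
      calc ∑ j, (2 * y j τ0 * (-(Γ τ0 + a j) * x j τ0)) * c j
          = ∑ j, (-2 * Γ τ0 * ((x j τ0 * y j τ0) * c j)
              - 2 * (a j * ((x j τ0 * y j τ0) * c j))) :=
            Finset.sum_congr rfl fun j _ => by ring
        _ = _ := by
            rw [Finset.sum_sub_distrib, ← Finset.mul_sum, ← Finset.mul_sum]
    rw [hsum]
    ring
end

section
/- Let (u,v,w) be a solution of the Neumann–Moser system of dimension n. Then for every ξ ∈ ℂ the function t ↦ U(t,ξ)·W(t,ξ) + V(t,ξ)² has identically vanishing derivative; consequently each coefficient h_k(t) of ξ^{2n+1−k} (1 ≤ k ≤ 2n+1) in the monic degree-(2n+1) polynomial U(t,ξ)W(t,ξ) + V(t,ξ)² is a constant function of t. -/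
open Finset

/-- Along a solution of the Neumann–Moser system, the quantity `U·W + V²` has vanishing
time derivative for every `ξ`; consequently each coefficient `h_k` of the monic degree
`2n+1` polynomial `U(t,ξ)W(t,ξ) + V(t,ξ)²` is a constant function of `t`. -/
theorem neumann_moser_integrals_constant (n : ℕ) (hn : 1 ≤ n) (u v w : ℕ → ℝ → ℂ)
    (hu : ∀ i ∈ Finset.Icc 1 n, Differentiable ℝ (u i))
    (hv : ∀ i ∈ Finset.Icc 1 n, Differentiable ℝ (v i))
    (hw : ∀ i ∈ Finset.Icc 1 (n + 1), Differentiable ℝ (w i))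
    (U V W : ℝ → ℂ → ℂ)
    (hU : ∀ t ξ, U t ξ = ξ ^ n + ∑ i ∈ Finset.Icc 1 n, u i t * ξ ^ (n - i))
    (hV : ∀ t ξ, V t ξ = ∑ i ∈ Finset.Icc 1 n, v i t * ξ ^ (n - i))
    (hW : ∀ t ξ, W t ξ = ξ ^ (n + 1) + ∑ i ∈ Finset.Icc 1 (n + 1), w i t * ξ ^ (n + 1 - i))
    (hUt : ∀ ξ t, deriv (fun s => U s ξ) t = -2 * V t ξ)
    (hVt : ∀ ξ t, deriv (fun s => V s ξ) t = -(ξ + w 1 t - u 1 t) * U t ξ + W t ξ)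
    (hWt : ∀ ξ t, deriv (fun s => W s ξ) t = 2 * (ξ + w 1 t - u 1 t) * V t ξ)
    (h : ℕ → ℝ → ℂ)
    (hh : ∀ t ξ, U t ξ * W t ξ + (V t ξ) ^ 2
        = ξ ^ (2 * n + 1) + ∑ k ∈ Finset.Icc 1 (2 * n + 1), h k t * ξ ^ (2 * n + 1 - k)) :
    (∀ (ξ : ℂ) (t : ℝ), deriv (fun s => U s ξ * W s ξ + (V s ξ) ^ 2) t = 0)
    ∧ (∀ k ∈ Finset.Icc 1 (2 * n + 1), ∀ t₁ t₂ : ℝ, h k t₁ = h k t₂) := by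
  have hUd : ∀ ξ, Differentiable ℝ (fun s => U s ξ) := by
    intro ξ
    have he : (fun s => U s ξ) = fun s => ξ ^ n + ∑ i ∈ Finset.Icc 1 n, u i s * ξ ^ (n - i) := by
      funext s; exact hU s ξ
    rw [he]
    exact (differentiable_const _).add
      (Differentiable.fun_sum fun i hi => (hu i hi).mul_const _)
  have hVd : ∀ ξ, Differentiable ℝ (fun s => V s ξ) := by
    intro ξ
    have he : (fun s => V s ξ) = fun s => ∑ i ∈ Finset.Icc 1 n, v i s * ξ ^ (n - i) := by
      funext s; exact hV s ξ
    rw [he]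
    exact Differentiable.fun_sum fun i hi => (hv i hi).mul_const _
  have hWd : ∀ ξ, Differentiable ℝ (fun s => W s ξ) := by
    intro ξ
    have he : (fun s => W s ξ)
        = fun s => ξ ^ (n + 1) + ∑ i ∈ Finset.Icc 1 (n + 1), w i s * ξ ^ (n + 1 - i) := by
      funext s; exact hW s ξ
    rw [he]
    exact (differentiable_const _).add
      (Differentiable.fun_sum fun i hi => (hw i hi).mul_const _)
  have key : ∀ (ξ : ℂ) (t : ℝ), deriv (fun s => U s ξ * W s ξ + (V s ξ) ^ 2) t = 0 := by
    intro ξ t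
    have hU' : HasDerivAt (fun s => U s ξ) (-2 * V t ξ) t := by
      have := (hUd ξ t).hasDerivAt; rwa [hUt ξ t] at this
    have hV' : HasDerivAt (fun s => V s ξ) (-(ξ + w 1 t - u 1 t) * U t ξ + W t ξ) t := by
      have := (hVd ξ t).hasDerivAt; rwa [hVt ξ t] at this
    have hW' : HasDerivAt (fun s => W s ξ) (2 * (ξ + w 1 t - u 1 t) * V t ξ) t := by
      have := (hWd ξ t).hasDerivAt; rwa [hWt ξ t] at this
    have hsq : HasDerivAt (fun s => (V s ξ) ^ 2)
        ((-(ξ + w 1 t - u 1 t) * U t ξ + W t ξ) * V t ξ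
          + V t ξ * (-(ξ + w 1 t - u 1 t) * U t ξ + W t ξ)) t := by
      have : (fun s => (V s ξ) ^ 2) = fun s => V s ξ * V s ξ := by
        funext s; ring
      rw [this]
      exact hV'.mul hV'
    have hsum := (hU'.fun_mul hW').fun_add hsq
    rw [hsum.deriv]
    ring
  refine ⟨key, ?_⟩
  intro k hk t₁ t₂
  have hconst : ∀ ξ : ℂ, U t₁ ξ * W t₁ ξ + (V t₁ ξ) ^ 2 = U t₂ ξ * W t₂ ξ + (V t₂ ξ) ^ 2 := by
    intro ξ
    exact is_const_of_deriv_eq_zero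
      (((hUd ξ).mul (hWd ξ)).add ((hVd ξ).pow 2)) (key ξ) t₁ t₂
  have hpoly : ∀ ξ : ℂ,
      (∑ i ∈ Finset.Icc 1 (2 * n + 1), (h i t₁ - h i t₂) * ξ ^ (2 * n + 1 - i)) = 0 := by
    intro ξ
    have := hconst ξ
    rw [hh t₁ ξ, hh t₂ ξ] at this
    have h2 : (∑ i ∈ Finset.Icc 1 (2 * n + 1), h i t₁ * ξ ^ (2 * n + 1 - i))
        = ∑ i ∈ Finset.Icc 1 (2 * n + 1), h i t₂ * ξ ^ (2 * n + 1 - i) := by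
      linear_combination this
    simp only [sub_mul]
    rw [Finset.sum_sub_distrib, h2, sub_self]
  set P : Polynomial ℂ :=
    ∑ i ∈ Finset.Icc 1 (2 * n + 1), Polynomial.C (h i t₁ - h i t₂) * Polynomial.X ^ (2 * n + 1 - i)
    with hP
  have hPeval : ∀ ξ : ℂ, P.eval ξ = 0 := by
    intro ξ
    rw [hP]
    simp only [Polynomial.eval_finset_sum, Polynomial.eval_mul, Polynomial.eval_C,
      Polynomial.eval_pow, Polynomial.eval_X]
    exact hpoly ξ
  have hP0 : P = 0 := Polynomial.zero_of_eval_zero P hPeval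
  have hcoeff : P.coeff (2 * n + 1 - k) = h k t₁ - h k t₂ := by
    rw [hP, Polynomial.finset_sum_coeff]
    rw [Finset.sum_eq_single k]
    · rw [Polynomial.coeff_C_mul, Polynomial.coeff_X_pow, if_pos rfl, mul_one]
    · intro i hi hik
      rw [Polynomial.coeff_C_mul, Polynomial.coeff_X_pow, if_neg, mul_zero]
      simp only [Finset.mem_Icc] at hi hk
      omega
    · intro hkk; exact absurd hk hkk
  rw [hP0] at hcoeff
  simp only [Polynomial.coeff_zero] at hcoeff
  exact sub_eq_zero.mp hcoeff.symm
end

section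
/- Let n ≥ 1, let a₁,…,a_{n+1} ∈ ℂ be pairwise distinct, and let x_k, y_k : ℝ → ℂ (1 ≤ k ≤ n+1) be differentiable functions satisfying the complexified Neumann system: ẋ_k = y_k, ẏ_k = −(Γ + a_k)x_k with Γ(t) = ∑_{i=1}^{n+1}(y_i(t)² − a_i x_i(t)²), together with ∑_k x_k(t)² ≡ 1 and ∑_k x_k(t) y_k(t) ≡ 0. Then for each 1 ≤ j ≤ n+1 the Uhlenbeck–Devaney function F_j(t) = x_j(t)² + ∑_{k≠j} (x_k(t)y_j(t) − x_j(t)y_k(t))² / (a_j − a_k) has identically vanishing derivative, i.e. each F_j is an integral of the Neumann system. -/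
open Finset

/-- The Uhlenbeck–Devaney functions `F_j` are integrals of the complexified Neumann
system: along any solution, their time derivative vanishes identically. -/
theorem uhlenbeck_devaney_integrals (n : ℕ) (hn : 1 ≤ n)
    (a : Fin (n + 1) → ℂ) (ha : Function.Injective a)
    (x y : Fin (n + 1) → ℝ → ℂ)
    (hxdiff : ∀ k, Differentiable ℝ (x k)) (hydiff : ∀ k, Differentiable ℝ (y k))
    (Γ : ℝ → ℂ) (hΓ : ∀ t, Γ t = ∑ i, ((y i t) ^ 2 - a i * (x i t) ^ 2))
    (hx' : ∀ k t, deriv (x k) t = y k t)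
    (hy' : ∀ k t, deriv (y k) t = -(Γ t + a k) * x k t)
    (hc1 : ∀ t, ∑ k, (x k t) ^ 2 = 1) (hc2 : ∀ t, ∑ k, x k t * y k t = 0) :
    ∀ (j : Fin (n + 1)) (t : ℝ),
      deriv (fun s => (x j s) ^ 2
        + ∑ k ∈ univ.erase j, (x k s * y j s - x j s * y k s) ^ 2 / (a j - a k)) t = 0 := by
  intro j t
  have hx : ∀ k, HasDerivAt (x k) (y k t) t := fun k => by
    have h := (hxdiff k t).hasDerivAt
    rwa [hx' k t] at h
  have hy : ∀ k, HasDerivAt (y k) (-(Γ t + a k) * x k t) t := fun k => by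
    have h := (hydiff k t).hasDerivAt
    rwa [hy' k t] at h
  have hW : ∀ k, HasDerivAt (fun s => x k s * y j s - x j s * y k s)
      ((a k - a j) * (x j t * x k t)) t := by
    intro k
    have h := ((hx k).fun_mul (hy j)).fun_sub ((hx j).fun_mul (hy k))
    refine h.congr_deriv ?_
    ring
  have hterm : ∀ k ∈ univ.erase j, HasDerivAt
      (fun s => (x k s * y j s - x j s * y k s) ^ 2 / (a j - a k))
      (-2 * (x k t * y j t - x j t * y k t) * (x j t * x k t)) t := by
    intro k hk
    have hkj : k ≠ j := (mem_erase.mp hk).1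
    have hne : a j - a k ≠ 0 := sub_ne_zero.mpr fun h => hkj (ha h).symm
    have h := ((hW k).fun_mul (hW k)).div_const (a j - a k)
    simp only [pow_two]
    refine h.congr_deriv ?_
    field_simp
    ring
  have hsum : HasDerivAt
      (fun s => ∑ k ∈ univ.erase j, (x k s * y j s - x j s * y k s) ^ 2 / (a j - a k))
      (∑ k ∈ univ.erase j, -2 * (x k t * y j t - x j t * y k t) * (x j t * x k t)) t :=
    HasDerivAt.fun_sum hterm
  have hsq : HasDerivAt (fun s => (x j s) ^ 2) (2 * x j t * y j t) t := by
    have h := (hx j).fun_mul (hx j)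
    simp only [pow_two]
    refine h.congr_deriv ?_
    ring
  have hF : HasDerivAt (fun s => (x j s) ^ 2
        + ∑ k ∈ univ.erase j, (x k s * y j s - x j s * y k s) ^ 2 / (a j - a k))
      (2 * x j t * y j t
        + ∑ k ∈ univ.erase j, -2 * (x k t * y j t - x j t * y k t) * (x j t * x k t)) t :=
    hsq.add hsum
  rw [hF.deriv]
  have h1 : ∑ k ∈ univ.erase j, (x k t) ^ 2 = 1 - (x j t) ^ 2 := by
    have := Finset.sum_erase_add univ (fun k => (x k t) ^ 2) (mem_univ j)
    rw [hc1 t] at this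
    linear_combination this
  have h2 : ∑ k ∈ univ.erase j, x k t * y k t = -(x j t * y j t) := by
    have := Finset.sum_erase_add univ (fun k => x k t * y k t) (mem_univ j)
    rw [hc2 t] at this
    linear_combination this
  have key : ∑ k ∈ univ.erase j, -2 * (x k t * y j t - x j t * y k t) * (x j t * x k t)
      = -2 * x j t * y j t * (∑ k ∈ univ.erase j, (x k t) ^ 2)
        + 2 * (x j t) ^ 2 * (∑ k ∈ univ.erase j, x k t * y k t) := by
    rw [Finset.mul_sum, Finset.mul_sum, ← Finset.sum_add_distrib]
    exact Finset.sum_congr rfl fun k _ => by ring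
  rw [key, h1, h2]
  ring
end

section
/- Let n ≥ 1, let a₁,…,a_{n+1} ∈ ℂ be pairwise distinct, and let x, y ∈ ℂ^{n+1}. Define F_j = x_j² + ∑_{k≠j}(x_k y_j − x_j y_k)²/(a_j − a_k) for 1 ≤ j ≤ n+1. Then for every ξ ∈ ℂ: 𝐕(ξ)² + 𝐔(ξ)·𝐖(ξ) = f(ξ) · ∑_{j=1}^{n+1} F_j ∏_{k≠j}(ξ − a_k). Moreover ∑_{j=1}^{n+1} F_j = ∑_{j=1}^{n+1} x_j²; in particular ∑_j F_j = 1 whenever ∑_j x_j² = 1. -/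
open Finset

lemma aux_antisym_sum {m : ℕ} (D : Fin m → Fin m → ℂ)
    (h : ∀ j k, j ≠ k → D j k + D k j = 0) :
    (∑ j, ∑ k ∈ univ.erase j, D j k) = 0 := by
  rw [Finset.sum_sigma']
  refine Finset.sum_involution (fun p _ => ⟨p.2, p.1⟩) ?_ ?_ ?_ ?_
  · rintro ⟨j, k⟩ hp
    simp only [Finset.mem_sigma, Finset.mem_erase, Finset.mem_univ, and_true] at hp
    exact h j k (Ne.symm hp.2)
  · rintro ⟨j, k⟩ hp _
    simp only [Finset.mem_sigma, Finset.mem_erase, Finset.mem_univ, and_true] at hp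
    intro he
    exact hp.2 (congrArg Sigma.fst he)
  · rintro ⟨j, k⟩ hp
    simp only [Finset.mem_sigma, Finset.mem_erase, Finset.mem_univ, and_true] at hp ⊢
    exact ⟨trivial, Ne.symm hp.2⟩
  · rintro ⟨j, k⟩ _
    rfl

/-- The identity `𝐕² + 𝐔·𝐖 = f · ∑_j F_j ∏_{k≠j}(ξ − a_k)` for the Moser polynomials,
where `F_j` are the Uhlenbeck–Devaney functions; moreover `∑ F_j = ∑ x_j²`, so
`∑ F_j = 1` whenever `∑ x_j² = 1`. -/
theorem moser_polynomials_and_uhlenbeck_devaney (n : ℕ) (hn : 1 ≤ n)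
    (a x y : Fin (n + 1) → ℂ) (ha : Function.Injective a)
    (F : Fin (n + 1) → ℂ)
    (hF : ∀ j, F j = (x j) ^ 2
        + ∑ k ∈ univ.erase j, (x k * y j - x j * y k) ^ 2 / (a j - a k)) :
    (∀ ξ : ℂ,
      (Complex.I * ∑ j, x j * y j * ∏ k ∈ univ.erase j, (ξ - a k)) ^ 2
        + (∑ j, (x j) ^ 2 * ∏ k ∈ univ.erase j, (ξ - a k))
          * ((∏ j, (ξ - a j)) + ∑ j, (y j) ^ 2 * ∏ k ∈ univ.erase j, (ξ - a k))
      = (∏ j, (ξ - a j)) * ∑ j, F j * ∏ k ∈ univ.erase j, (ξ - a k))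
    ∧ (∑ j, F j = ∑ j, (x j) ^ 2)
    ∧ ((∑ j, (x j) ^ 2 = 1) → ∑ j, F j = 1) := by
  have hane : ∀ j k : Fin (n+1), j ≠ k → a j - a k ≠ 0 := fun j k hjk =>
    sub_ne_zero.mpr (fun h => hjk (ha h))
  have hsum0 : ∑ j, ∑ k ∈ univ.erase j,
      (x k * y j - x j * y k) ^ 2 / (a j - a k) = 0 := by
    apply aux_antisym_sum
    intro j k hjk
    rw [show a k - a j = -(a j - a k) by ring, div_neg]
    ring
  have hF2 : ∑ j, F j = ∑ j, (x j) ^ 2 := by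
    simp only [hF, Finset.sum_add_distrib, hsum0, add_zero]
  refine ⟨?_, hF2, fun h1 => hF2.trans h1⟩
  intro ξ
  set p : Fin (n+1) → ℂ := fun j => ∏ k ∈ univ.erase j, (ξ - a k) with hpdef
  have hfp : ∀ j, (∏ i, (ξ - a i)) = (ξ - a j) * p j := fun j =>
    (Finset.mul_prod_erase univ _ (Finset.mem_univ j)).symm
  set G : Fin (n+1) → Fin (n+1) → ℂ := fun j k =>
    x j ^ 2 * y k ^ 2 * (p j * p k) - (x j * y j) * (x k * y k) * (p j * p k) with hGdef
  have h1 : (∑ j, (x j) ^ 2 * p j) * (∑ j, (y j) ^ 2 * p j)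
      - (∑ j, x j * y j * p j) ^ 2 = ∑ j, ∑ k ∈ univ.erase j, G j k := by
    rw [sq, Finset.sum_mul_sum, Finset.sum_mul_sum, ← Finset.sum_sub_distrib]
    refine Finset.sum_congr rfl fun j _ => ?_
    rw [← Finset.sum_sub_distrib, ← Finset.add_sum_erase univ _ (Finset.mem_univ j),
      show (x j) ^ 2 * p j * ((y j) ^ 2 * p j) - x j * y j * p j * (x j * y j * p j) = 0
        from by ring, zero_add]
    exact Finset.sum_congr rfl fun k _ => by simp only [hGdef]; ring
  have hDD : ∑ j, ∑ k ∈ univ.erase j, G j k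
      = ∑ j, ∑ k ∈ univ.erase j,
        (∏ i, (ξ - a i)) * ((x k * y j - x j * y k) ^ 2 / (a j - a k)) * p j := by
    rw [← sub_eq_zero, ← Finset.sum_sub_distrib]
    simp only [← Finset.sum_sub_distrib]
    apply aux_antisym_sum
    intro j k hjk
    have hd := hane j k hjk
    have hneg : (a k - a j) / (a j - a k) = -1 := by
      rw [div_eq_iff hd]; ring
    rw [show a k - a j = -(a j - a k) by ring, div_neg]
    linear_combination (((x k * y j - x j * y k) ^ 2 / (a j - a k)) * p k) * (hfp j)
      - (((x k * y j - x j * y k) ^ 2 / (a j - a k)) * p j) * (hfp k)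
      + ((x k * y j - x j * y k) ^ 2 * p j * p k) * hneg
  have h2 : (∏ i, (ξ - a i)) * (∑ j, F j * p j)
      = (∏ i, (ξ - a i)) * (∑ j, (x j) ^ 2 * p j)
        + ∑ j, ∑ k ∈ univ.erase j,
          (∏ i, (ξ - a i)) * ((x k * y j - x j * y k) ^ 2 / (a j - a k)) * p j := by
    have hFe : ∀ j, F j * p j = (x j) ^ 2 * p j
        + ∑ k ∈ univ.erase j, ((x k * y j - x j * y k) ^ 2 / (a j - a k)) * p j :=
      fun j => by rw [hF, add_mul, Finset.sum_mul]
    simp only [hFe, Finset.sum_add_distrib, mul_add, Finset.mul_sum, mul_assoc]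
  rw [mul_pow, Complex.I_sq, neg_one_mul]
  linear_combination h1 + hDD - h2
end

section
/- Let n ≥ 1, let a₁,…,a_{n+1} ∈ ℂ be pairwise distinct, and let x, y ∈ ℂ^{n+1} satisfy ∑_j x_j² = 1 and ∑_j x_j y_j = 0. Let F_j = x_j² + ∑_{k≠j}(x_k y_j − x_j y_k)²/(a_j − a_k) be the Uhlenbeck–Devaney integrals, and let h₁,…,h_{2n+1} be defined by 𝐔(ξ)𝐖(ξ) + 𝐕(ξ)² = ξ^{2n+1} + ∑_{k=1}^{2n+1} h_k ξ^{2n+1−k}. Let M^{(1,1)} be the (n+1)×(n+1) matrix with entries M^{(1,1)}_{k,j} = e_{k−1}(−a^{(j)}), let D^{I} be the lower-triangular Toeplitz matrix with D^{I}_{i,j} = e_{i−j}(−a) (j ≤ i), and D^{II} the upper-triangular Toeplitz matrix with D^{II}_{i,j} = e_{n+1+i−j}(−a) (j ≥ i). Then (1, h₁, …, h_n)ᵀ = D^{I} M^{(1,1)} (F₁,…,F_{n+1})ᵀ and (h_{n+1}, …, h_{2n+1})ᵀ = D^{II} M^{(1,1)} (F₁,…,F_{n+1})ᵀ; moreover D^{I}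 M^{(1,1)} is invertible, so (F₁,…,F_{n+1})ᵀ = (D^{I} M^{(1,1)})⁻¹ (1, h₁, …, h_n)ᵀ, and if additionally all a_j ≠ 0 then (F₁,…,F_{n+1})ᵀ = (D^{II} M^{(1,1)})⁻¹ (h_{n+1}, …, h_{2n+1})ᵀ. -/
open Finset

section Auxiliary

open Polynomial

private lemma antisym_sum' {m : Type*} [Fintype m] (B : m → m → ℂ)
    (hB : ∀ j k, B j k + B k j = 0) : ∑ j, ∑ k, B j k = 0 := by
  have h2 : (∑ j, ∑ k, B j k) + (∑ j, ∑ k, B j k) = 0 := by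
    nth_rewrite 2 [Finset.sum_comm]
    rw [← Finset.sum_add_distrib]
    simp_rw [← Finset.sum_add_distrib, hB]
    simp
  linear_combination h2 / 2

private lemma star_identity' (n : ℕ) (a x y : Fin (n + 1) → ℂ) (ha : Function.Injective a)
    (F : Fin (n + 1) → ℂ)
    (hF : ∀ j, F j = (x j) ^ 2
        + ∑ k ∈ univ.erase j, (x k * y j - x j * y k) ^ 2 / (a j - a k)) (ξ : ℂ) :
    (∑ j, (x j) ^ 2 * ∏ k ∈ univ.erase j, (ξ - a k))
          * ((∏ j, (ξ - a j)) + ∑ j, (y j) ^ 2 * ∏ k ∈ univ.erase j, (ξ - a k))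
        + (Complex.I * ∑ j, x j * y j * ∏ k ∈ univ.erase j, (ξ - a k)) ^ 2
      = (∏ j, (ξ - a j)) * ∑ j, F j * ∏ k ∈ univ.erase j, (ξ - a k) := by
  set p : Fin (n + 1) → ℂ := fun j => ∏ k ∈ univ.erase j, (ξ - a k) with hp
  set fv : ℂ := ∏ j, (ξ - a j) with hfv
  have hfp : ∀ j, fv = (ξ - a j) * p j := fun j =>
    (Finset.mul_prod_erase univ _ (mem_univ j)).symm
  have fact1 : ∀ j k : Fin (n + 1), j ≠ k →
      fv * p j - fv * p k = (a j - a k) * (p j * p k) := by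
    intro j k hjk
    have e1 : fv * p j = (ξ - a k) * (p k * p j) := by rw [hfp k]; ring
    have e2 : fv * p k = (ξ - a j) * (p j * p k) := by rw [hfp j]; ring
    rw [e1, e2]; ring
  set C : Fin (n + 1) → Fin (n + 1) → ℂ := fun j k =>
    if k = j then 0 else (x j ^ 2 * y k ^ 2 - x j * y j * (x k * y k)) * (p j * p k) with hC
  set D : Fin (n + 1) → Fin (n + 1) → ℂ := fun j k =>
    if k = j then 0 else (x k * y j - x j * y k) ^ 2 * (a j - a k)⁻¹ * (fv * p j) with hD
  have hCD : ∑ j, ∑ k, (C j k - D j k) = 0 := by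
    apply antisym_sum'
    intro j k
    by_cases hjk : j = k
    · subst hjk; simp [hC, hD]
    · have hk : ¬ (k = j) := fun e => hjk e.symm
      have hne : a j - a k ≠ 0 := sub_ne_zero.mpr (fun e => hjk (ha e))
      simp only [hC, hD, if_neg hk, if_neg hjk]
      have key := fact1 j k hjk
      have hinv : (a j - a k)⁻¹ * (a j - a k) = 1 := inv_mul_cancel₀ hne
      have hinv' : (a k - a j)⁻¹ = -(a j - a k)⁻¹ := by
        rw [show a k - a j = -(a j - a k) by ring, inv_neg]
      rw [hinv']
      linear_combination (-(x k * y j - x j * y k) ^ 2 * (a j - a k)⁻¹) * key +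
        (-(x k * y j - x j * y k) ^ 2 * (p j * p k)) * hinv
  have hCeq : ∀ j k, C j k =
      x j ^ 2 * y k ^ 2 * (p j * p k) - x j * y j * (x k * y k) * (p j * p k) := by
    intro j k
    by_cases hk : k = j
    · subst hk; simp [hC]; ring
    · rw [hC]; simp only [if_neg hk]; ring
  have hUY : (∑ j, x j ^ 2 * p j) * (∑ j, y j ^ 2 * p j)
      = ∑ j, ∑ k, x j ^ 2 * y k ^ 2 * (p j * p k) := by
    rw [Finset.sum_mul_sum]
    exact Finset.sum_congr rfl fun j _ => Finset.sum_congr rfl fun k _ => by ring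
  have hS2 : (∑ j, x j * y j * p j) ^ 2
      = ∑ j, ∑ k, x j * y j * (x k * y k) * (p j * p k) := by
    rw [sq, Finset.sum_mul_sum]
    exact Finset.sum_congr rfl fun j _ => Finset.sum_congr rfl fun k _ => by ring
  have hCsum : ∑ j, ∑ k, C j k
      = (∑ j, x j ^ 2 * p j) * (∑ j, y j ^ 2 * p j) - (∑ j, x j * y j * p j) ^ 2 := by
    simp_rw [hCeq, Finset.sum_sub_distrib]
    rw [hUY, hS2]
  have hDsum : ∑ j, ∑ k, D j k
      = fv * ∑ j, (∑ k ∈ univ.erase j, (x k * y j - x j * y k) ^ 2 / (a j - a k)) * p j := by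
    rw [Finset.mul_sum]
    refine Finset.sum_congr rfl fun j _ => ?_
    have h0 : D j j = 0 := by simp [hD]
    rw [← Finset.sum_erase univ h0, Finset.sum_mul, Finset.mul_sum]
    refine Finset.sum_congr rfl fun k hk => ?_
    have hkj : k ≠ j := (Finset.mem_erase.mp hk).1
    rw [hD]
    simp only [if_neg hkj]
    rw [div_eq_mul_inv]
    ring
  have hFs : ∑ j, F j * p j = ∑ j, x j ^ 2 * p j
      + ∑ j, (∑ k ∈ univ.erase j, (x k * y j - x j * y k) ^ 2 / (a j - a k)) * p j := by
    rw [← Finset.sum_add_distrib]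
    exact Finset.sum_congr rfl fun j _ => by rw [hF j]; ring
  have hI2 : (Complex.I : ℂ) ^ 2 = -1 := Complex.I_sq
  have hsub : ∑ j, ∑ k, (C j k - D j k) = (∑ j, ∑ k, C j k) - ∑ j, ∑ k, D j k := by
    simp [Finset.sum_sub_distrib]
  rw [hFs]
  rw [hsub, hCsum, hDsum] at hCD
  linear_combination hCD + hI2 * (∑ j, x j * y j * p j) ^ 2

private lemma prod_coeff' {σ : Type*} (s : Finset σ) (a : σ → ℂ) {r : ℕ} (hr : r ≤ s.card) :
    (∏ j ∈ s, (X - C (a j))).coeff r = (s.val.map fun l => -a l).esymm (s.card - r) := by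
  have h1 : (∏ j ∈ s, (X - C (a j))) = (s.val.map fun i => X + C (-a i)).prod := by
    simp only [map_neg, ← sub_eq_add_neg]; rfl
  rw [h1, Multiset.prod_X_add_C_coeff' s.val (fun l => -a l) (by simpa using hr)]
  simp

private lemma prod_natDegree' {σ : Type*} (s : Finset σ) (a : σ → ℂ) :
    (∏ j ∈ s, (X - C (a j))).natDegree = s.card := by
  rw [Polynomial.natDegree_prod _ _ (fun i _ => X_sub_C_ne_zero (a i))]
  simp [Polynomial.natDegree_X_sub_C]

private lemma reflect_sum' (n : ℕ) (g : ℕ → ℂ) :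
    ∑ m ∈ Finset.range (n + 1), g m = ∑ k : Fin (n + 1), g (n - (k : ℕ)) := by
  rw [Fin.sum_univ_eq_sum_range (fun k => g (n - k)) (n + 1)]
  exact (Finset.sum_range_reflect g (n + 1)).symm

private lemma esymm_zero'' (s : Multiset ℂ) : s.esymm 0 = 1 := by
  simp [Multiset.esymm, Multiset.powersetCard_zero_left]

private lemma esymm_top' (n : ℕ) (a : Fin (n + 1) → ℂ) :
    ((univ : Finset (Fin (n + 1))).val.map fun l => -a l).esymm (n + 1) = ∏ j, (-a j) := by
  have h0 := prod_coeff' (univ : Finset (Fin (n + 1))) a (r := 0) (Nat.zero_le _)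
  rw [Nat.sub_zero, Finset.card_univ, Fintype.card_fin] at h0
  rw [← h0, Polynomial.coeff_zero_eq_eval_zero, Polynomial.eval_prod]
  simp

private lemma eval_pj' (n : ℕ) (a : Fin (n + 1) → ℂ) (j : Fin (n + 1)) (z : ℂ) :
    ∑ k : Fin (n + 1), z ^ (n - (k : ℕ))
        * ((Finset.univ.erase j).val.map fun l => -a l).esymm (k : ℕ)
      = ∏ l ∈ Finset.univ.erase j, (z - a l) := by
  have hcard : (Finset.univ.erase j).card = n := by
    rw [Finset.card_erase_of_mem (Finset.mem_univ j), Finset.card_univ, Fintype.card_fin]; rfl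
  have hdeg : (∏ l ∈ Finset.univ.erase j, (X - C (a l))).natDegree = n := by
    rw [prod_natDegree', hcard]
  have hev := Polynomial.eval_eq_sum_range' (p := ∏ l ∈ Finset.univ.erase j, (X - C (a l)))
    (n := n + 1) (by rw [hdeg]; exact n.lt_succ_self) z
  rw [Polynomial.eval_prod] at hev
  simp only [Polynomial.eval_sub, Polynomial.eval_X, Polynomial.eval_C] at hev
  rw [hev, reflect_sum']
  refine Finset.sum_congr rfl fun k _ => ?_
  rw [prod_coeff' _ _ (by rw [hcard]; exact Nat.sub_le _ _), hcard,
    Nat.sub_sub_self (Fin.is_le k)]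
  ring

private lemma M11_det_ne' (n : ℕ) (a : Fin (n + 1) → ℂ) (ha : Function.Injective a)
    (M11 : Matrix (Fin (n + 1)) (Fin (n + 1)) ℂ)
    (hM11 : ∀ k j : Fin (n + 1),
      M11 k j = ((univ.erase j).val.map (fun l => -a l)).esymm (k : ℕ)) :
    M11.det ≠ 0 := by
  set A : Matrix (Fin (n + 1)) (Fin (n + 1)) ℂ :=
    Matrix.of fun i k => a i ^ (n - (k : ℕ)) with hA
  have hAM : A * M11 = Matrix.diagonal fun j => ∏ l ∈ univ.erase j, (a j - a l) := by
    ext i j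
    rw [Matrix.mul_apply, Matrix.diagonal_apply]
    have : ∑ k, A i k * M11 k j = ∏ l ∈ univ.erase j, (a i - a l) := by
      rw [← eval_pj' n a j (a i)]
      exact Finset.sum_congr rfl fun k _ => by rw [hM11, hA]; rfl
    rw [this]
    by_cases hij : i = j
    · rw [if_pos hij, hij]
    · rw [if_neg hij]
      exact Finset.prod_eq_zero (Finset.mem_erase.mpr ⟨hij, Finset.mem_univ i⟩) (sub_self _)
  have hdet : A.det * M11.det ≠ 0 := by
    rw [← Matrix.det_mul, hAM, Matrix.det_diagonal]
    refine Finset.prod_ne_zero_iff.mpr fun j _ => Finset.prod_ne_zero_iff.mpr fun l hl => ?_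
    exact sub_ne_zero.mpr fun e => (Finset.mem_erase.mp hl).1 (ha e).symm
  exact right_ne_zero_of_mul hdet

private lemma DI_det' (n : ℕ) (a : Fin (n + 1) → ℂ)
    (DI : Matrix (Fin (n + 1)) (Fin (n + 1)) ℂ)
    (hDI : ∀ i j : Fin (n + 1), DI i j =
      if (j : ℕ) ≤ (i : ℕ) then (univ.val.map (fun l => -a l)).esymm ((i : ℕ) - (j : ℕ))
      else 0) : DI.det = 1 := by
  have htri : DI.BlockTriangular OrderDual.toDual := by
    intro i j hij
    rw [hDI, if_neg]
    exact not_le.mpr hij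
  rw [Matrix.det_of_lowerTriangular DI htri]
  refine Finset.prod_eq_one fun i _ => ?_
  rw [hDI, if_pos le_rfl, Nat.sub_self, esymm_zero'']

private lemma DII_det' (n : ℕ) (a : Fin (n + 1) → ℂ)
    (DII : Matrix (Fin (n + 1)) (Fin (n + 1)) ℂ)
    (hDII : ∀ i j : Fin (n + 1), DII i j =
      if (i : ℕ) ≤ (j : ℕ) then (univ.val.map (fun l => -a l)).esymm (n + 1 + (i : ℕ) - (j : ℕ))
      else 0) (ha0 : ∀ j, a j ≠ 0) : DII.det ≠ 0 := by
  have htri : DII.BlockTriangular id := by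
    intro i j hij
    rw [hDII, if_neg]
    exact not_le.mpr hij
  rw [Matrix.det_of_upperTriangular htri]
  refine Finset.prod_ne_zero_iff.mpr fun i _ => ?_
  rw [hDII, if_pos le_rfl, show n + 1 + (i : ℕ) - (i : ℕ) = n + 1 by omega, esymm_top']
  exact Finset.prod_ne_zero_iff.mpr fun j _ => neg_ne_zero.mpr (ha0 j)

private lemma coeff_main' (n : ℕ) (a : Fin (n + 1) → ℂ) (F : Fin (n + 1) → ℂ) (h : ℕ → ℂ)
    (M11 : Matrix (Fin (n + 1)) (Fin (n + 1)) ℂ)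
    (hM11 : ∀ k j : Fin (n + 1),
      M11 k j = ((univ.erase j).val.map (fun l => -a l)).esymm (k : ℕ))
    (hPR : (∏ j, (X - C (a j))) * (∑ j, C (F j) * ∏ k ∈ univ.erase j, (X - C (a k)))
        = X ^ (2 * n + 1) + ∑ k ∈ Finset.Icc 1 (2 * n + 1), C (h k) * X ^ (2 * n + 1 - k)) :
    (∀ t : ℕ,
      (X ^ (2 * n + 1)
        + ∑ k ∈ Finset.Icc 1 (2 * n + 1), C (h k) * X ^ (2 * n + 1 - k) : ℂ[X]).coeff t
      = ∑ m ∈ Finset.range (n + 1),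
          (∑ j, C (F j) * ∏ k ∈ univ.erase j, (X - C (a k)) : ℂ[X]).coeff m
            * (if m ≤ t then (∏ j, (X - C (a j)) : ℂ[X]).coeff (t - m) else 0))
    ∧ (∀ k : Fin (n + 1),
        (∑ j, C (F j) * ∏ l ∈ univ.erase j, (X - C (a l)) : ℂ[X]).coeff (n - (k : ℕ))
          = M11.mulVec F k) := by
  set f : ℂ[X] := ∏ j, (X - C (a j)) with hf
  set Q : ℂ[X] := ∑ j, C (F j) * ∏ k ∈ univ.erase j, (X - C (a k)) with hQdef
  have hcard_erase : ∀ j : Fin (n + 1), (univ.erase j).card = n := by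
    intro j
    rw [Finset.card_erase_of_mem (Finset.mem_univ j), Finset.card_univ, Fintype.card_fin]
    rfl
  have hQdeg : Q.natDegree < n + 1 := by
    refine Nat.lt_succ_of_le (Polynomial.natDegree_sum_le_of_forall_le _ _ fun j _ => ?_)
    refine (Polynomial.natDegree_C_mul_le _ _).trans ?_
    rw [prod_natDegree', hcard_erase]
  have hQ : Q = ∑ m ∈ Finset.range (n + 1), C (Q.coeff m) * X ^ m := by
    conv_lhs => rw [Q.as_sum_range' (n + 1) hQdeg]
    simp_rw [← Polynomial.C_mul_X_pow_eq_monomial]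
  have hmul : ∀ t, (f * Q).coeff t = ∑ m ∈ Finset.range (n + 1),
      Q.coeff m * (if m ≤ t then f.coeff (t - m) else 0) := by
    intro t
    conv_lhs => rw [hQ]
    rw [Finset.mul_sum, Polynomial.finset_sum_coeff]
    refine Finset.sum_congr rfl fun m _ => ?_
    rw [show f * (C (Q.coeff m) * X ^ m) = C (Q.coeff m) * (f * X ^ m) by ring,
      Polynomial.coeff_C_mul, Polynomial.coeff_mul_X_pow']
  constructor
  · intro t
    rw [← hPR, hmul t]
  · intro k
    rw [Polynomial.finset_sum_coeff, Matrix.mulVec, dotProduct]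
    refine Finset.sum_congr rfl fun j _ => ?_
    rw [Polynomial.coeff_C_mul, hM11,
      prod_coeff' _ _ (by rw [hcard_erase]; exact Nat.sub_le _ _), hcard_erase,
      Nat.sub_sub_self (Fin.is_le k)]
    ring

end Auxiliary

/-- The invertible transformation between the Uhlenbeck–Devaney integrals
`F₁, …, F_{n+1}` of the Neumann system and the integrals `h₁, …, h_{2n+1}` of the
Neumann–Moser system, realized by the matrices `D^I·M^{(1,1)}` and `D^II·M^{(1,1)}`. -/
theorem F_to_h_transformation (n : ℕ) (hn : 1 ≤ n)
    (a x y : Fin (n + 1) → ℂ) (ha : Function.Injective a)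
    (hx : ∑ j, (x j) ^ 2 = 1) (hxy : ∑ j, x j * y j = 0)
    (F : Fin (n + 1) → ℂ)
    (hF : ∀ j, F j = (x j) ^ 2
        + ∑ k ∈ univ.erase j, (x k * y j - x j * y k) ^ 2 / (a j - a k))
    (h : ℕ → ℂ)
    (hdef : ∀ ξ : ℂ,
      (∑ j, (x j) ^ 2 * ∏ k ∈ univ.erase j, (ξ - a k))
          * ((∏ j, (ξ - a j)) + ∑ j, (y j) ^ 2 * ∏ k ∈ univ.erase j, (ξ - a k))
        + (Complex.I * ∑ j, x j * y j * ∏ k ∈ univ.erase j, (ξ - a k)) ^ 2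
      = ξ ^ (2 * n + 1) + ∑ k ∈ Finset.Icc 1 (2 * n + 1), h k * ξ ^ (2 * n + 1 - k))
    (M11 DI DII : Matrix (Fin (n + 1)) (Fin (n + 1)) ℂ)
    (hM11 : ∀ k j : Fin (n + 1),
      M11 k j = ((univ.erase j).val.map (fun l => -a l)).esymm (k : ℕ))
    (hDI : ∀ i j : Fin (n + 1), DI i j =
      if (j : ℕ) ≤ (i : ℕ) then (univ.val.map (fun l => -a l)).esymm ((i : ℕ) - (j : ℕ)) else 0)
    (hDII : ∀ i j : Fin (n + 1), DII i j =
      if (i : ℕ) ≤ (j : ℕ) then (univ.val.map (fun l => -a l)).esymm (n + 1 + (i : ℕ) - (j : ℕ))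
      else 0) :
    (∀ k : Fin (n + 1),
      (DI * M11).mulVec F k = if (k : ℕ) = 0 then 1 else h (k : ℕ))
    ∧ (∀ k : Fin (n + 1), (DII * M11).mulVec F k = h (n + 1 + (k : ℕ)))
    ∧ IsUnit (DI * M11)
    ∧ (∀ j, F j = (DI * M11)⁻¹.mulVec
        (fun k : Fin (n + 1) => if (k : ℕ) = 0 then 1 else h (k : ℕ)) j)
    ∧ ((∀ j, a j ≠ 0) →
        ∀ j, F j = (DII * M11)⁻¹.mulVec (fun k : Fin (n + 1) => h (n + 1 + (k : ℕ))) j) := by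
  classical
  open Polynomial in
  have hPR : (∏ j, (X - C (a j))) * (∑ j, C (F j) * ∏ k ∈ univ.erase j, (X - C (a k)))
      = X ^ (2 * n + 1)
        + ∑ k ∈ Finset.Icc 1 (2 * n + 1), C (h k) * X ^ (2 * n + 1 - k) := by
    apply Polynomial.funext
    intro ξ
    have h1 := star_identity' n a x y ha F hF ξ
    have h2 := hdef ξ
    have e1 : Polynomial.eval ξ
        ((∏ j, (X - C (a j))) * ∑ j, C (F j) * ∏ k ∈ univ.erase j, (X - C (a k)))
        = (∏ j, (ξ - a j)) * ∑ j, F j * ∏ k ∈ univ.erase j, (ξ - a k) := by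
      simp [Polynomial.eval_prod, Polynomial.eval_finset_sum]
    have e2 : Polynomial.eval ξ (X ^ (2 * n + 1)
        + ∑ k ∈ Finset.Icc 1 (2 * n + 1), C (h k) * X ^ (2 * n + 1 - k) : ℂ[X])
        = ξ ^ (2 * n + 1) + ∑ k ∈ Finset.Icc 1 (2 * n + 1), h k * ξ ^ (2 * n + 1 - k) := by
      simp [Polynomial.eval_finset_sum]
    rw [e1, e2]
    exact h1.symm.trans h2
  open Polynomial in
  obtain ⟨hco, hQc⟩ := coeff_main' n a F h M11 hM11 hPR
  open Polynomial in
  have hfc : ∀ r : ℕ, r ≤ n + 1 → (∏ j, (X - C (a j)) : ℂ[X]).coeff r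
      = (univ.val.map fun l => -a l).esymm (n + 1 - r) := by
    intro r hr
    rw [prod_coeff' _ _ (by simpa using hr)]
    congr 1
    rw [Finset.card_univ, Fintype.card_fin]
  open Polynomial in
  have hfc0 : ∀ r : ℕ, n + 1 < r → (∏ j, (X - C (a j)) : ℂ[X]).coeff r = 0 := by
    intro r hr
    refine Polynomial.coeff_eq_zero_of_natDegree_lt ?_
    rw [prod_natDegree', Finset.card_univ, Fintype.card_fin]
    exact hr
  open Polynomial in
  -- Part 1
  have part1 : ∀ k : Fin (n + 1),
      (DI * M11).mulVec F k = if (k : ℕ) = 0 then 1 else h (k : ℕ) := by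
    intro k
    have hk := Fin.is_le k
    have hcL : (X ^ (2 * n + 1)
        + ∑ k ∈ Finset.Icc 1 (2 * n + 1), C (h k) * X ^ (2 * n + 1 - k) : ℂ[X]).coeff
          (2 * n + 1 - (k : ℕ))
        = ∑ j, DI k j * M11.mulVec F j := by
      rw [hco (2 * n + 1 - (k : ℕ)), reflect_sum']
      refine Finset.sum_congr rfl fun j _ => ?_
      have hjn := Fin.is_le j
      rw [hQc j, if_pos (by omega : n - (j : ℕ) ≤ 2 * n + 1 - (k : ℕ)),
        show 2 * n + 1 - (k : ℕ) - (n - (j : ℕ)) = n + 1 - (k : ℕ) + (j : ℕ) by omega]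
      by_cases hj : (j : ℕ) ≤ (k : ℕ)
      · rw [hfc _ (by omega),
          show n + 1 - (n + 1 - (k : ℕ) + (j : ℕ)) = (k : ℕ) - (j : ℕ) by omega,
          hDI, if_pos hj]
        ring
      · rw [hfc0 _ (by omega), hDI, if_neg hj]
        ring
    have hcR : (X ^ (2 * n + 1)
        + ∑ k ∈ Finset.Icc 1 (2 * n + 1), C (h k) * X ^ (2 * n + 1 - k) : ℂ[X]).coeff
          (2 * n + 1 - (k : ℕ))
        = if (k : ℕ) = 0 then 1 else h (k : ℕ) := by
      rw [Polynomial.coeff_add, Polynomial.coeff_X_pow, Polynomial.finset_sum_coeff]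
      simp_rw [Polynomial.coeff_C_mul, Polynomial.coeff_X_pow]
      by_cases hk0 : (k : ℕ) = 0
      · rw [if_pos hk0, hk0]
        rw [if_pos (by omega : 2 * n + 1 - 0 = 2 * n + 1)]
        rw [Finset.sum_eq_zero, add_zero]
        intro b hb
        have hbb := Finset.mem_Icc.mp hb
        rw [if_neg (by omega), mul_zero]
      · rw [if_neg hk0, if_neg (by omega : ¬ 2 * n + 1 - (k : ℕ) = 2 * n + 1), zero_add]
        rw [Finset.sum_eq_single_of_mem (k : ℕ)
          (Finset.mem_Icc.mpr ⟨by omega, by omega⟩)]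
        · rw [if_pos rfl, mul_one]
        · intro b hb hbk
          have hbb := Finset.mem_Icc.mp hb
          rw [if_neg (by omega), mul_zero]
    rw [← Matrix.mulVec_mulVec]
    calc DI.mulVec (M11.mulVec F) k = ∑ j, DI k j * M11.mulVec F j := by
          rw [Matrix.mulVec, dotProduct]
      _ = _ := by rw [← hcL, hcR]
  open Polynomial in
  -- Part 2
  have part2 : ∀ k : Fin (n + 1), (DII * M11).mulVec F k = h (n + 1 + (k : ℕ)) := by
    intro k
    have hk := Fin.is_le k
    have hcL : (X ^ (2 * n + 1)
        + ∑ k ∈ Finset.Icc 1 (2 * n + 1), C (h k) * X ^ (2 * n + 1 - k) : ℂ[X]).coeff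
          (n - (k : ℕ))
        = ∑ j, DII k j * M11.mulVec F j := by
      rw [hco (n - (k : ℕ)), reflect_sum']
      refine Finset.sum_congr rfl fun j _ => ?_
      have hjn := Fin.is_le j
      rw [hQc j]
      by_cases hj : (k : ℕ) ≤ (j : ℕ)
      · rw [if_pos (by omega : n - (j : ℕ) ≤ n - (k : ℕ)),
          show n - (k : ℕ) - (n - (j : ℕ)) = (j : ℕ) - (k : ℕ) by omega,
          hfc _ (by omega),
          show n + 1 - ((j : ℕ) - (k : ℕ)) = n + 1 + (k : ℕ) - (j : ℕ) by omega,
          hDII, if_pos hj]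
        ring
      · rw [if_neg (by omega : ¬ n - (j : ℕ) ≤ n - (k : ℕ)), hDII, if_neg hj]
        ring
    have hcR : (X ^ (2 * n + 1)
        + ∑ k ∈ Finset.Icc 1 (2 * n + 1), C (h k) * X ^ (2 * n + 1 - k) : ℂ[X]).coeff
          (n - (k : ℕ))
        = h (n + 1 + (k : ℕ)) := by
      rw [Polynomial.coeff_add, Polynomial.coeff_X_pow, Polynomial.finset_sum_coeff]
      simp_rw [Polynomial.coeff_C_mul, Polynomial.coeff_X_pow]
      rw [if_neg (by omega : ¬ n - (k : ℕ) = 2 * n + 1), zero_add]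
      rw [Finset.sum_eq_single_of_mem (n + 1 + (k : ℕ))
        (Finset.mem_Icc.mpr ⟨by omega, by omega⟩)]
      · rw [if_pos (by omega), mul_one]
      · intro b hb hbk
        have hbb := Finset.mem_Icc.mp hb
        rw [if_neg (by omega), mul_zero]
    rw [← Matrix.mulVec_mulVec]
    calc DII.mulVec (M11.mulVec F) k = ∑ j, DII k j * M11.mulVec F j := by
          rw [Matrix.mulVec, dotProduct]
      _ = _ := by rw [← hcL, hcR]
  -- invertibility
  have hdetDI : (DI * M11).det ≠ 0 := by
    rw [Matrix.det_mul, DI_det' n a DI hDI, one_mul]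
    exact M11_det_ne' n a ha M11 hM11
  have hunit : IsUnit (DI * M11) := by
    rw [Matrix.isUnit_iff_isUnit_det]
    exact isUnit_iff_ne_zero.mpr hdetDI
  refine ⟨part1, part2, hunit, ?_, ?_⟩
  · intro j
    have hv : (fun k : Fin (n + 1) => if (k : ℕ) = 0 then 1 else h (k : ℕ))
        = (DI * M11).mulVec F := funext fun k => (part1 k).symm
    rw [hv, Matrix.mulVec_mulVec, Matrix.nonsing_inv_mul _ (isUnit_iff_ne_zero.mpr hdetDI),
      Matrix.one_mulVec]
  · intro ha0 j
    have hdetDII : (DII * M11).det ≠ 0 := by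
      rw [Matrix.det_mul]
      exact mul_ne_zero (DII_det' n a DII hDII ha0) (M11_det_ne' n a ha M11 hM11)
    have hv : (fun k : Fin (n + 1) => h (n + 1 + (k : ℕ)))
        = (DII * M11).mulVec F := funext fun k => (part2 k).symm
    rw [hv, Matrix.mulVec_mulVec, Matrix.nonsing_inv_mul _ (isUnit_iff_ne_zero.mpr hdetDII),
      Matrix.one_mulVec]
end

section
/- Let (u,v,w) be a solution of the Neumann–Moser system of dimension n whose coordinate functions are twice differentiable, and set Γ(t) = w₁(t) − u₁(t). Then for all t: v_i = −(1/2)·u̇_i for all 1 ≤ i ≤ n; w₁ = Γ + u₁; w_i = −(1/2)·ü_{i−1} + Γ·u_{i−1} + u_i for all 2 ≤ i ≤ n; and w_{n+1} = −(1/2)·ü_n + Γ·u_n. In particular all v_i and w_i are differential polynomials in Γ, u₁, …, u_n. -/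
open Finset Polynomial

lemma coeff_hit (m d i₀ : ℕ) (a : ℕ → ℂ) (h1 : 1 ≤ i₀) (h2 : i₀ ≤ m) (hm : m ≤ d) :
    (∑ i ∈ Icc 1 m, Polynomial.C (a i) * Polynomial.X ^ (d - i)).coeff (d - i₀) = a i₀ := by
  rw [Polynomial.finset_sum_coeff, Finset.sum_eq_single i₀]
  · simp [Polynomial.coeff_C_mul, Polynomial.coeff_X_pow]
  · intro b hb hne
    simp only [Finset.mem_Icc] at hb
    have : d - b ≠ d - i₀ := by omega
    simp [Polynomial.coeff_C_mul, Polynomial.coeff_X_pow, this.symm]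
  · intro h; exact absurd (Finset.mem_Icc.mpr ⟨h1, h2⟩) h

lemma coeff_miss (m d : ℕ) (a : ℕ → ℂ) (k : ℕ) (h : ∀ i, 1 ≤ i → i ≤ m → d - i ≠ k) :
    (∑ i ∈ Icc 1 m, Polynomial.C (a i) * Polynomial.X ^ (d - i)).coeff k = 0 := by
  rw [Polynomial.finset_sum_coeff]
  apply Finset.sum_eq_zero
  intro i hi
  simp only [Finset.mem_Icc] at hi
  simp [Polynomial.coeff_C_mul, Polynomial.coeff_X_pow, (h i hi.1 hi.2).symm]


/-- Along a solution of the Neumann–Moser system, the coordinates `v_i` and `w_i` are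
differential polynomials in `Γ = w₁ − u₁` and `u₁, …, u_n`:
`v_i = −(1/2)u̇_i`, `w₁ = Γ + u₁`, `w_i = −(1/2)ü_{i−1} + Γu_{i−1} + u_i` (`2 ≤ i ≤ n`),
and `w_{n+1} = −(1/2)ü_n + Γu_n`. -/
theorem neumann_moser_vw_as_differential_polynomials (n : ℕ) (hn : 1 ≤ n)
    (u v w : ℕ → ℝ → ℂ)
    (hu : ∀ i ∈ Finset.Icc 1 n, Differentiable ℝ (u i) ∧ Differentiable ℝ (deriv (u i)))
    (hv : ∀ i ∈ Finset.Icc 1 n, Differentiable ℝ (v i) ∧ Differentiable ℝ (deriv (v i)))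
    (hw : ∀ i ∈ Finset.Icc 1 (n + 1), Differentiable ℝ (w i) ∧ Differentiable ℝ (deriv (w i)))
    (U V W : ℝ → ℂ → ℂ)
    (hU : ∀ t ξ, U t ξ = ξ ^ n + ∑ i ∈ Finset.Icc 1 n, u i t * ξ ^ (n - i))
    (hV : ∀ t ξ, V t ξ = ∑ i ∈ Finset.Icc 1 n, v i t * ξ ^ (n - i))
    (hW : ∀ t ξ, W t ξ = ξ ^ (n + 1) + ∑ i ∈ Finset.Icc 1 (n + 1), w i t * ξ ^ (n + 1 - i))
    (hUt : ∀ ξ t, deriv (fun s => U s ξ) t = -2 * V t ξ)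
    (hVt : ∀ ξ t, deriv (fun s => V s ξ) t = -(ξ + w 1 t - u 1 t) * U t ξ + W t ξ)
    (hWt : ∀ ξ t, deriv (fun s => W s ξ) t = 2 * (ξ + w 1 t - u 1 t) * V t ξ)
    (Γ : ℝ → ℂ) (hΓ : ∀ t, Γ t = w 1 t - u 1 t) :
    ∀ t : ℝ,
      (∀ i ∈ Finset.Icc 1 n, v i t = -(1 / 2) * deriv (u i) t)
      ∧ w 1 t = Γ t + u 1 t
      ∧ (∀ i, 2 ≤ i → i ≤ n →
          w i t = -(1 / 2) * deriv (deriv (u (i - 1))) t + Γ t * u (i - 1) t + u i t)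
      ∧ w (n + 1) t = -(1 / 2) * deriv (deriv (u n)) t + Γ t * u n t := by
  -- derivative of U in t
  have hderivU : ∀ ξ t, deriv (fun s => U s ξ) t
      = ∑ i ∈ Finset.Icc 1 n, deriv (u i) t * ξ ^ (n - i) := by
    intro ξ t
    have he : (fun s => U s ξ)
        = fun s => ξ ^ n + ∑ i ∈ Finset.Icc 1 n, u i s * ξ ^ (n - i) :=
      funext fun s => hU s ξ
    rw [he, deriv_const_add,
      deriv_fun_sum (fun i hi => ((hu i hi).1.differentiableAt).mul_const _)]
    exact Finset.sum_congr rfl fun i hi => deriv_mul_const ((hu i hi).1.differentiableAt) _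
  have hderivV : ∀ ξ t, deriv (fun s => V s ξ) t
      = ∑ i ∈ Finset.Icc 1 n, deriv (v i) t * ξ ^ (n - i) := by
    intro ξ t
    have he : (fun s => V s ξ)
        = fun s => ∑ i ∈ Finset.Icc 1 n, v i s * ξ ^ (n - i) :=
      funext fun s => hV s ξ
    rw [he, deriv_fun_sum (fun i hi => ((hv i hi).1.differentiableAt).mul_const _)]
    exact Finset.sum_congr rfl fun i hi => deriv_mul_const ((hv i hi).1.differentiableAt) _
  -- Part 1 for all t
  have part1 : ∀ t, ∀ i ∈ Finset.Icc 1 n, v i t = -(1 / 2) * deriv (u i) t := by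
    intro t
    set p : Polynomial ℂ :=
      ∑ i ∈ Icc 1 n, Polynomial.C (deriv (u i) t + 2 * v i t) * Polynomial.X ^ (n - i) with hp
    have hp0 : p = 0 := by
      apply Polynomial.funext
      intro ξ
      have h1 := hUt ξ t
      rw [hderivU, hV] at h1
      simp only [hp, Polynomial.eval_finset_sum, Polynomial.eval_mul, Polynomial.eval_C,
        Polynomial.eval_pow, Polynomial.eval_X, Polynomial.eval_zero, add_mul,
        Finset.sum_add_distrib]
      rw [Finset.mul_sum] at h1
      rw [h1, ← Finset.sum_add_distrib]
      exact Finset.sum_eq_zero fun i _ => by ring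
    intro i hi
    simp only [Finset.mem_Icc] at hi
    have hc := congrArg (fun q => Polynomial.coeff q (n - i)) hp0
    simp only [Polynomial.coeff_zero] at hc
    rw [hp] at hc
    rw [coeff_hit n n i _ hi.1 hi.2 le_rfl] at hc
    have : deriv (u i) t + 2 * v i t = 0 := hc
    linear_combination ((1/2) : ℂ) * this
  have hdv : ∀ i ∈ Finset.Icc 1 n, ∀ t, deriv (v i) t = -(1 / 2) * deriv (deriv (u i)) t := by
    intro i hi t
    have he : v i = fun s => -(1 / 2 : ℂ) * deriv (u i) s := funext fun s => part1 s i hi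
    rw [he, deriv_const_mul _ ((hu i hi).2.differentiableAt)]
  intro t
  have hq0 : ((∑ i ∈ Icc 1 n, Polynomial.C (deriv (v i) t) * Polynomial.X ^ (n - i))
      + Polynomial.C (Γ t) * Polynomial.X ^ n
      + (∑ i ∈ Icc 1 n, Polynomial.C (u i t) * Polynomial.X ^ (n + 1 - i))
      + Polynomial.C (Γ t) * ∑ i ∈ Icc 1 n, Polynomial.C (u i t) * Polynomial.X ^ (n - i)
      - ∑ i ∈ Icc 1 (n + 1), Polynomial.C (w i t) * Polynomial.X ^ (n + 1 - i)) = 0 := by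
    apply Polynomial.funext
    intro ξ
    have h2 := hVt ξ t
    rw [hderivV, hU, hW] at h2
    have e1 : ∑ i ∈ Icc 1 n, u i t * ξ ^ (n + 1 - i)
        = ξ * ∑ i ∈ Icc 1 n, u i t * ξ ^ (n - i) := by
      rw [Finset.mul_sum]
      refine Finset.sum_congr rfl fun i hi => ?_
      simp only [Finset.mem_Icc] at hi
      have h3 : n + 1 - i = (n - i) + 1 := by omega
      rw [h3, pow_succ]; ring
    simp only [Polynomial.eval_finset_sum, Polynomial.eval_add, Polynomial.eval_sub,
      Polynomial.eval_mul, Polynomial.eval_C, Polynomial.eval_pow, Polynomial.eval_X,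
      Polynomial.eval_zero]
    rw [hΓ]
    linear_combination h2 + e1
  have key : ∀ i, 2 ≤ i → i ≤ n + 1 →
      deriv (v (i - 1)) t + Γ t * u (i - 1) t + (if i ≤ n then u i t else 0) - w i t = 0 := by
    intro i h2i hin1
    have cA : (∑ j ∈ Icc 1 n, Polynomial.C (deriv (v j) t) * Polynomial.X ^ (n - j)).coeff
        (n + 1 - i) = deriv (v (i - 1)) t := by
      have h : n + 1 - i = n - (i - 1) := by omega
      rw [h]; exact coeff_hit n n (i - 1) _ (by omega) (by omega) le_rfl
    have cB : (Polynomial.C (Γ t) * Polynomial.X ^ n).coeff (n + 1 - i) = 0 := by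
      rw [Polynomial.coeff_C_mul, Polynomial.coeff_X_pow,
        if_neg (by omega : ¬ n + 1 - i = n), mul_zero]
    have cC : (∑ j ∈ Icc 1 n, Polynomial.C (u j t) * Polynomial.X ^ (n + 1 - j)).coeff
        (n + 1 - i) = (if i ≤ n then u i t else 0) := by
      by_cases h : i ≤ n
      · rw [if_pos h]; exact coeff_hit n (n + 1) i _ (by omega) h (by omega)
      · rw [if_neg h]; exact coeff_miss n (n + 1) _ _ (fun j h1 h2 => by omega)
    have cD : (∑ j ∈ Icc 1 n, Polynomial.C (u j t) * Polynomial.X ^ (n - j)).coeff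
        (n + 1 - i) = u (i - 1) t := by
      have h : n + 1 - i = n - (i - 1) := by omega
      rw [h]; exact coeff_hit n n (i - 1) _ (by omega) (by omega) le_rfl
    have cE : (∑ j ∈ Icc 1 (n + 1), Polynomial.C (w j t) * Polynomial.X ^ (n + 1 - j)).coeff
        (n + 1 - i) = w i t := coeff_hit (n + 1) (n + 1) i _ (by omega) hin1 le_rfl
    have hc := congrArg (fun r => Polynomial.coeff r (n + 1 - i)) hq0
    simp only [Polynomial.coeff_zero, Polynomial.coeff_sub, Polynomial.coeff_add,
      Polynomial.coeff_C_mul, cA, cB, cC, cD, cE] at hc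
    linear_combination hc
  refine ⟨part1 t, by rw [hΓ]; ring, ?_, ?_⟩
  · intro i h2 hin
    have k := key i h2 (by omega)
    rw [if_pos hin] at k
    rw [hdv (i - 1) (Finset.mem_Icc.mpr ⟨by omega, by omega⟩) t] at k
    linear_combination -k
  · have k := key (n + 1) (by omega) le_rfl
    rw [if_neg (by omega)] at k
    simp only [Nat.add_sub_cancel] at k
    rw [hdv n (Finset.mem_Icc.mpr ⟨hn, le_rfl⟩) t] at k
    linear_combination -k
end

section
/- Let n ≥ 3 and let (u,v,w) be a solution of the Neumann–Moser system of dimension n whose coordinate functions are twice differentiable. For each t define h₁(t) = w₁(t) + u₁(t) and, for 3 ≤ k ≤ n, h_k(t) = u_k + w_k + w₁u_{k−1} + ∑_{i=1}^{k−2}(u_i w_{k−i} + v_i v_{k−1−i}) (the coefficient of ξ^{2n+1−k} in U(t,ξ)W(t,ξ) + V(t,ξ)²). Then for every 3 ≤ k ≤ n and every t: u_k = (1/4)·ü_{k−1} − (h₁ − (3/2)u₁)·u_{k−1} + (1/2)·h_k − (1/8)·∑_{i=1}^{k−2}( 4u_i u_{k−i} + u̇_i u̇_{k−i−1} − 2u_i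 ü_{k−i−1} + 4(h₁ − 2u₁) u_i u_{k−1−i} ). -/
open Finset

/-- Coefficient extraction for polynomials of the form `∑ C (a i) * X ^ (n - i)`. -/
lemma nm_coeff_extract (n m j : ℕ) (a : ℕ → ℂ) (hmn : m ≤ n) (hj : j ∈ Finset.Icc 1 m) :
    (∑ i ∈ Finset.Icc 1 m, Polynomial.C (a i) * Polynomial.X ^ (n - i)).coeff (n - j) = a j := by
  rw [Polynomial.finset_sum_coeff, Finset.sum_eq_single_of_mem j hj]
  · simp [Polynomial.coeff_C_mul, Polynomial.coeff_X_pow]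
  · intro i hi hij
    simp only [Finset.mem_Icc] at hi hj
    rw [Polynomial.coeff_C_mul, Polynomial.coeff_X_pow, if_neg (by omega), mul_zero]

/-- Differentiating a function of the form `x ↦ ∑ f i x * c i`. -/
lemma nm_deriv_sum (s : Finset ℕ) (f : ℕ → ℝ → ℂ) (hf : ∀ i ∈ s, Differentiable ℝ (f i))
    (c : ℕ → ℂ) (t : ℝ) :
    deriv (fun x => ∑ i ∈ s, f i x * c i) t = ∑ i ∈ s, deriv (f i) t * c i := by
  rw [deriv_fun_sum (fun i hi => ((hf i hi).differentiableAt).mul_const _)]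
  exact Finset.sum_congr rfl fun i hi => deriv_mul_const ((hf i hi).differentiableAt) _

/-- The recursion for the coordinates `u_k` (`3 ≤ k ≤ n`) of a solution of the
Neumann–Moser system, in terms of the integrals `h₁` and `h_k`. -/
theorem neumann_moser_u_recursion (n : ℕ) (hn : 3 ≤ n)
    (u v w : ℕ → ℝ → ℂ)
    (hu : ∀ i ∈ Finset.Icc 1 n, Differentiable ℝ (u i) ∧ Differentiable ℝ (deriv (u i)))
    (hv : ∀ i ∈ Finset.Icc 1 n, Differentiable ℝ (v i) ∧ Differentiable ℝ (deriv (v i)))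
    (hw : ∀ i ∈ Finset.Icc 1 (n + 1), Differentiable ℝ (w i) ∧ Differentiable ℝ (deriv (w i)))
    (U V W : ℝ → ℂ → ℂ)
    (hU : ∀ t ξ, U t ξ = ξ ^ n + ∑ i ∈ Finset.Icc 1 n, u i t * ξ ^ (n - i))
    (hV : ∀ t ξ, V t ξ = ∑ i ∈ Finset.Icc 1 n, v i t * ξ ^ (n - i))
    (hW : ∀ t ξ, W t ξ = ξ ^ (n + 1) + ∑ i ∈ Finset.Icc 1 (n + 1), w i t * ξ ^ (n + 1 - i))
    (hUt : ∀ ξ t, deriv (fun s => U s ξ) t = -2 * V t ξ)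
    (hVt : ∀ ξ t, deriv (fun s => V s ξ) t = -(ξ + w 1 t - u 1 t) * U t ξ + W t ξ)
    (hWt : ∀ ξ t, deriv (fun s => W s ξ) t = 2 * (ξ + w 1 t - u 1 t) * V t ξ)
    (h : ℕ → ℝ → ℂ)
    (hh1 : ∀ t, h 1 t = w 1 t + u 1 t)
    (hhk : ∀ k, 3 ≤ k → k ≤ n → ∀ t,
      h k t = u k t + w k t + w 1 t * u (k - 1) t
        + ∑ i ∈ Finset.Icc 1 (k - 2), (u i t * w (k - i) t + v i t * v (k - 1 - i) t)) :
    ∀ k, 3 ≤ k → k ≤ n → ∀ t : ℝ,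
      u k t = (1 / 4) * deriv (deriv (u (k - 1))) t
        - (h 1 t - (3 / 2) * u 1 t) * u (k - 1) t + (1 / 2) * h k t
        - (1 / 8) * ∑ i ∈ Finset.Icc 1 (k - 2),
            (4 * u i t * u (k - i) t + deriv (u i) t * deriv (u (k - i - 1)) t
              - 2 * u i t * deriv (deriv (u (k - i - 1))) t
              + 4 * (h 1 t - 2 * u 1 t) * u i t * u (k - 1 - i) t) := by
  -- derivative of U in t, as a polynomial in ξ
  have hderivU : ∀ (ξ : ℂ) (t : ℝ),
      deriv (fun s => U s ξ) t = ∑ i ∈ Finset.Icc 1 n, deriv (u i) t * ξ ^ (n - i) := by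
    intro ξ t
    have h1 : (fun s => U s ξ) = fun s => ξ ^ n + ∑ i ∈ Finset.Icc 1 n, u i s * ξ ^ (n - i) :=
      funext fun s => hU s ξ
    rw [h1, deriv_const_add, nm_deriv_sum _ _ (fun i hi => (hu i hi).1)]
  have hderivV : ∀ (ξ : ℂ) (t : ℝ),
      deriv (fun s => V s ξ) t = ∑ i ∈ Finset.Icc 1 n, deriv (v i) t * ξ ^ (n - i) := by
    intro ξ t
    have h1 : (fun s => V s ξ) = fun s => ∑ i ∈ Finset.Icc 1 n, v i s * ξ ^ (n - i) :=
      funext fun s => hV s ξ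
    rw [h1, nm_deriv_sum _ _ (fun i hi => (hv i hi).1)]
  -- Step A : v j = -(1/2) * (u j)'
  have hA : ∀ j ∈ Finset.Icc 1 n, ∀ t : ℝ, v j t = -(2⁻¹ : ℂ) * deriv (u j) t := by
    intro j hj t
    have key : (∑ i ∈ Finset.Icc 1 n,
        Polynomial.C (deriv (u i) t + 2 * v i t) * Polynomial.X ^ (n - i)) = 0 := by
      apply Polynomial.funext
      intro ξ
      have e1 := hUt ξ t
      rw [hderivU ξ t, hV] at e1
      simp only [Polynomial.eval_finset_sum, Polynomial.eval_mul, Polynomial.eval_C,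
        Polynomial.eval_pow, Polynomial.eval_X, Polynomial.eval_zero]
      have e2 : ∑ i ∈ Finset.Icc 1 n, (deriv (u i) t + 2 * v i t) * ξ ^ (n - i)
          = (∑ i ∈ Finset.Icc 1 n, deriv (u i) t * ξ ^ (n - i))
            + 2 * ∑ i ∈ Finset.Icc 1 n, v i t * ξ ^ (n - i) := by
        rw [Finset.mul_sum, ← Finset.sum_add_distrib]
        exact Finset.sum_congr rfl fun i _ => by ring
      rw [e2, e1]
      ring
    have hc := nm_coeff_extract n n j (fun i => deriv (u i) t + 2 * v i t) le_rfl hj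
    rw [key] at hc
    simp only [Polynomial.coeff_zero] at hc
    have hc' : deriv (u j) t + 2 * v j t = 0 := hc.symm
    linear_combination (2⁻¹ : ℂ) * hc'
  -- Step B : (v j)' = w (j+1) - u (j+1) - (w1 - u1) * u j  for 1 ≤ j ≤ n - 1
  have hB : ∀ j : ℕ, 1 ≤ j → j + 1 ≤ n → ∀ t : ℝ,
      deriv (v j) t = w (j+1) t - u (j+1) t - (w 1 t - u 1 t) * u j t := by
    intro j hj1 hjn t
    set PU : Polynomial ℂ :=
      Polynomial.X ^ n + ∑ i ∈ Finset.Icc 1 n, Polynomial.C (u i t) * Polynomial.X ^ (n - i)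
      with hPU
    set PW : Polynomial ℂ :=
      Polynomial.X ^ (n+1) +
        ∑ i ∈ Finset.Icc 1 (n+1), Polynomial.C (w i t) * Polynomial.X ^ (n + 1 - i) with hPW
    have key : (∑ i ∈ Finset.Icc 1 n, Polynomial.C (deriv (v i) t) * Polynomial.X ^ (n - i))
        = -(Polynomial.X * PU) - Polynomial.C (w 1 t - u 1 t) * PU + PW := by
      apply Polynomial.funext
      intro ξ
      have e1 := hVt ξ t
      rw [hderivV ξ t, hU, hW] at e1
      simp only [hPU, hPW, Polynomial.eval_finset_sum, Polynomial.eval_mul, Polynomial.eval_C,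
        Polynomial.eval_pow, Polynomial.eval_X, Polynomial.eval_add, Polynomial.eval_sub,
        Polynomial.eval_neg]
      rw [e1]
      ring
    have hcL := nm_coeff_extract n n j (fun i => deriv (v i) t) le_rfl
      (by simp only [Finset.mem_Icc]; omega)
    rw [key] at hcL
    -- now compute the coefficient of the right-hand side at degree n - j
    have cPU1 : PU.coeff (n - j) = u j t := by
      rw [hPU, Polynomial.coeff_add, Polynomial.coeff_X_pow, if_neg (by omega),
        nm_coeff_extract n n j (fun i => u i t) le_rfl (by simp only [Finset.mem_Icc]; omega)]
      ring
    have cPU2 : PU.coeff (n - j - 1) = u (j+1) t := by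
      rw [hPU, Polynomial.coeff_add, Polynomial.coeff_X_pow, if_neg (by omega),
        show n - j - 1 = n - (j+1) from by omega,
        nm_coeff_extract n n (j+1) (fun i => u i t) le_rfl
          (by simp only [Finset.mem_Icc]; omega)]
      ring
    have cPW : PW.coeff (n - j) = w (j+1) t := by
      rw [hPW, Polynomial.coeff_add, Polynomial.coeff_X_pow, if_neg (by omega),
        show n - j = n + 1 - (j+1) from by omega,
        nm_coeff_extract (n+1) (n+1) (j+1) (fun i => w i t) le_rfl
          (by simp only [Finset.mem_Icc]; omega)]
      ring
    have cXPU : (Polynomial.X * PU).coeff (n - j) = u (j+1) t := by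
      rw [show n - j = (n - j - 1) + 1 from by omega, Polynomial.coeff_X_mul, cPU2]
    rw [Polynomial.coeff_add, Polynomial.coeff_sub, Polynomial.coeff_neg, cXPU,
      Polynomial.coeff_C_mul, cPU1, cPW] at hcL
    linear_combination -hcL
  -- Step C : (v j)' = -(1/2) * (u j)''
  have hC : ∀ j ∈ Finset.Icc 1 n, ∀ t : ℝ,
      deriv (v j) t = -(2⁻¹ : ℂ) * deriv (deriv (u j)) t := by
    intro j hj t
    have hvj : v j = fun s => -(2⁻¹ : ℂ) * deriv (u j) s := funext (hA j hj)
    rw [hvj, deriv_const_mul _ ((hu j hj).2.differentiableAt)]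
  -- Step D : formula for w (j+1)
  have hD : ∀ j : ℕ, 1 ≤ j → j + 1 ≤ n → ∀ t : ℝ,
      w (j+1) t = u (j+1) t + (w 1 t - u 1 t) * u j t
        - 2⁻¹ * deriv (deriv (u j)) t := by
    intro j hj1 hjn t
    have e1 := hB j hj1 hjn t
    have e2 := hC j (by simp only [Finset.mem_Icc]; omega) t
    rw [e2] at e1
    linear_combination -e1
  -- final computation
  intro k hk3 hkn t
  rw [hhk k hk3 hkn t, hh1]
  have hwk := hD (k-1) (by omega) (by omega) t
  rw [show k - 1 + 1 = k from by omega] at hwk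
  rw [hwk]
  have hsum1 : ∑ i ∈ Finset.Icc 1 (k-2), (u i t * w (k-i) t + v i t * v (k-1-i) t)
      = ∑ i ∈ Finset.Icc 1 (k-2),
          (u i t * (u (k-i) t + (w 1 t - u 1 t) * u (k-i-1) t
              - 2⁻¹ * deriv (deriv (u (k-i-1))) t)
            + (-(2⁻¹:ℂ) * deriv (u i) t) * (-(2⁻¹:ℂ) * deriv (u (k-i-1)) t)) := by
    apply Finset.sum_congr rfl
    intro i hi
    simp only [Finset.mem_Icc] at hi
    have e1 := hD (k-i-1) (by omega) (by omega) t
    rw [show k - i - 1 + 1 = k - i from by omega] at e1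
    rw [e1, hA i (by simp only [Finset.mem_Icc]; omega) t,
      hA (k-1-i) (by simp only [Finset.mem_Icc]; omega) t,
      show k - 1 - i = k - i - 1 from by omega]
  have hsum2 : ∑ i ∈ Finset.Icc 1 (k-2),
        (4 * u i t * u (k - i) t + deriv (u i) t * deriv (u (k - i - 1)) t
          - 2 * u i t * deriv (deriv (u (k - i - 1))) t
          + 4 * (w 1 t + u 1 t - 2 * u 1 t) * u i t * u (k - 1 - i) t)
      = ∑ i ∈ Finset.Icc 1 (k-2), (4:ℂ) *
          (u i t * (u (k-i) t + (w 1 t - u 1 t) * u (k-i-1) t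
              - 2⁻¹ * deriv (deriv (u (k-i-1))) t)
            + (-(2⁻¹:ℂ) * deriv (u i) t) * (-(2⁻¹:ℂ) * deriv (u (k-i-1)) t)) := by
    apply Finset.sum_congr rfl
    intro i hi
    simp only [Finset.mem_Icc] at hi
    rw [show k - 1 - i = k - i - 1 from by omega]
    ring
  rw [hsum1, hsum2, ← Finset.mul_sum]
  ring
end

section
/- Let (u,v,w) be a solution of the Neumann–Moser system of dimension n whose coordinate functions are three times differentiable, and set Γ(t) = w₁(t) − u₁(t). Then for all t: u̇₁ = −(1/2)·Γ̇; u̇_{i+1} = (1/4)·u_i′′′ − Γ·u̇_i − (1/2)·Γ̇·u_i for all 1 ≤ i ≤ n−1; and u_n′′′ − 4Γ·u̇_n − 2Γ̇·u_n = 0. (Thus, with the Lenard operator Λ[Γ] = (1/4)∂² − Γ − (1/2)Γ̇∂⁻¹, the functions u₁,…,u_n satisfy the stationary Korteweg–de Vries recursion u̇_{i+1} = Λ[Γ]u̇_i with Λ[Γ]u̇_n = 0.) -/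
open Finset

open Polynomial in
private lemma coeff_ext (m : ℕ) (a b : ℕ → ℂ)
    (h : ∀ ξ : ℂ, ∑ i ∈ Finset.Icc 1 m, a i * ξ ^ (m - i)
        = ∑ i ∈ Finset.Icc 1 m, b i * ξ ^ (m - i)) :
    ∀ i ∈ Finset.Icc 1 m, a i = b i := by
  have hpq : (∑ i ∈ Finset.Icc 1 m, (monomial (m - i) (a i) : ℂ[X]))
      = ∑ i ∈ Finset.Icc 1 m, monomial (m - i) (b i) := by
    apply Polynomial.funext
    intro ξ
    simpa [eval_finset_sum, eval_monomial] using h ξ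
  intro i hi
  simp only [Finset.mem_Icc] at hi
  have hc := congrArg (fun p => coeff p (m - i)) hpq
  simp only [finset_sum_coeff, coeff_monomial] at hc
  have key : ∀ c : ℕ → ℂ,
      (∑ j ∈ Finset.Icc 1 m, if m - j = m - i then c j else 0) = c i := by
    intro c
    rw [Finset.sum_eq_single i]
    · simp
    · intro j hj hne
      simp only [Finset.mem_Icc] at hj
      have : m - j ≠ m - i := by omega
      simp [this]
    · intro hmem
      exact absurd (Finset.mem_Icc.mpr hi) hmem
  rw [key a, key b] at hc
  exact hc

private lemma sum_shift (m : ℕ) (f : ℕ → ℂ) :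
    ∑ i ∈ Finset.Icc 2 (m + 1), f i = ∑ i ∈ Finset.Icc 1 m, f (i + 1) := by
  rw [← Finset.map_add_right_Icc 1 m 1, Finset.sum_map]
  rfl

private lemma sum_ite_two (m : ℕ) (g : ℕ → ℂ) :
    ∑ i ∈ Finset.Icc 1 (m + 1), (if 2 ≤ i then g i else 0)
      = ∑ i ∈ Finset.Icc 1 m, g (i + 1) := by
  rw [← Finset.sum_filter]
  have : Finset.filter (fun i => 2 ≤ i) (Finset.Icc 1 (m + 1)) = Finset.Icc 2 (m + 1) := by
    ext x
    simp only [Finset.mem_filter, Finset.mem_Icc]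
    omega
  rw [this, sum_shift]

private lemma sum_ite_le (m : ℕ) (g : ℕ → ℂ) :
    ∑ i ∈ Finset.Icc 1 (m + 1), (if i ≤ m then g i else 0)
      = ∑ i ∈ Finset.Icc 1 m, g i := by
  rw [← Finset.sum_filter]
  have : Finset.filter (fun i => i ≤ m) (Finset.Icc 1 (m + 1)) = Finset.Icc 1 m := by
    ext x
    simp only [Finset.mem_filter, Finset.mem_Icc]
    omega
  rw [this]

private lemma sum_ite_one (m : ℕ) (g : ℕ → ℂ) :
    ∑ i ∈ Finset.Icc 1 (m + 1), (if i = 1 then g i else 0) = g 1 := by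
  rw [Finset.sum_ite_eq' (Finset.Icc 1 (m + 1)) 1 g]
  simp

private lemma deriv_poly_sum (s : Finset ℕ) (c : ℕ → ℝ → ℂ) (e : ℕ → ℕ) (k : ℂ)
    (hc : ∀ i ∈ s, Differentiable ℝ (c i)) (ξ : ℂ) (t : ℝ) :
    deriv (fun τ => k + ∑ i ∈ s, c i τ * ξ ^ e i) t = ∑ i ∈ s, deriv (c i) t * ξ ^ e i := by
  have h : HasDerivAt (fun τ => k + ∑ i ∈ s, c i τ * ξ ^ e i)
      (∑ i ∈ s, deriv (c i) t * ξ ^ e i) t :=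
    HasDerivAt.const_add k (HasDerivAt.fun_sum fun i hi => ((hc i hi) t).hasDerivAt.mul_const _)
  exact h.deriv

/-- Along a solution of the Neumann–Moser system, the functions `u₁, …, u_n` satisfy the
stationary Korteweg–de Vries (Lenard) recursion for `Γ = w₁ − u₁`:
`u̇₁ = −(1/2)Γ̇`, `u̇_{i+1} = (1/4)u_i''' − Γu̇_i − (1/2)Γ̇u_i` for `1 ≤ i ≤ n−1`, and
`u_n''' − 4Γu̇_n − 2Γ̇u_n = 0`. -/
theorem neumann_moser_kdv_recursion (n : ℕ) (hn : 1 ≤ n)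
    (u v w : ℕ → ℝ → ℂ)
    (hu : ∀ i ∈ Finset.Icc 1 n, Differentiable ℝ (u i) ∧ Differentiable ℝ (deriv (u i))
        ∧ Differentiable ℝ (deriv (deriv (u i))))
    (hv : ∀ i ∈ Finset.Icc 1 n, Differentiable ℝ (v i) ∧ Differentiable ℝ (deriv (v i))
        ∧ Differentiable ℝ (deriv (deriv (v i))))
    (hw : ∀ i ∈ Finset.Icc 1 (n + 1), Differentiable ℝ (w i) ∧ Differentiable ℝ (deriv (w i))
        ∧ Differentiable ℝ (deriv (deriv (w i))))
    (U V W : ℝ → ℂ → ℂ)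
    (hU : ∀ t ξ, U t ξ = ξ ^ n + ∑ i ∈ Finset.Icc 1 n, u i t * ξ ^ (n - i))
    (hV : ∀ t ξ, V t ξ = ∑ i ∈ Finset.Icc 1 n, v i t * ξ ^ (n - i))
    (hW : ∀ t ξ, W t ξ = ξ ^ (n + 1) + ∑ i ∈ Finset.Icc 1 (n + 1), w i t * ξ ^ (n + 1 - i))
    (hUt : ∀ ξ t, deriv (fun s => U s ξ) t = -2 * V t ξ)
    (hVt : ∀ ξ t, deriv (fun s => V s ξ) t = -(ξ + w 1 t - u 1 t) * U t ξ + W t ξ)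
    (hWt : ∀ ξ t, deriv (fun s => W s ξ) t = 2 * (ξ + w 1 t - u 1 t) * V t ξ)
    (Γ : ℝ → ℂ) (hΓ : ∀ t, Γ t = w 1 t - u 1 t) :
    (∀ t : ℝ, deriv (u 1) t = -(1 / 2) * deriv Γ t)
    ∧ (∀ i, 1 ≤ i → i ≤ n - 1 → ∀ t : ℝ,
        deriv (u (i + 1)) t = (1 / 4) * deriv (deriv (deriv (u i))) t
          - Γ t * deriv (u i) t - (1 / 2) * deriv Γ t * u i t)
    ∧ (∀ t : ℝ,
        deriv (deriv (deriv (u n))) t - 4 * Γ t * deriv (u n) t - 2 * deriv Γ t * u n t = 0) := by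
  -- derivative computations for U, V, W in t
  have hderivU : ∀ (ξ : ℂ) (t : ℝ), deriv (fun s => U s ξ) t
      = ∑ i ∈ Finset.Icc 1 n, deriv (u i) t * ξ ^ (n - i) := by
    intro ξ t
    have hf : (fun s => U s ξ) = fun τ => ξ ^ n + ∑ i ∈ Finset.Icc 1 n, u i τ * ξ ^ (n - i) :=
      funext fun τ => hU τ ξ
    rw [hf, deriv_poly_sum _ _ _ _ (fun i hi => (hu i hi).1)]
  have hderivV : ∀ (ξ : ℂ) (t : ℝ), deriv (fun s => V s ξ) t
      = ∑ i ∈ Finset.Icc 1 n, deriv (v i) t * ξ ^ (n - i) := by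
    intro ξ t
    have hf : (fun s => V s ξ) = fun τ => (0:ℂ) + ∑ i ∈ Finset.Icc 1 n, v i τ * ξ ^ (n - i) := by
      funext τ
      rw [hV τ ξ, zero_add]
    rw [hf, deriv_poly_sum _ _ _ _ (fun i hi => (hv i hi).1)]
  have hderivW : ∀ (ξ : ℂ) (t : ℝ), deriv (fun s => W s ξ) t
      = ∑ i ∈ Finset.Icc 1 (n + 1), deriv (w i) t * ξ ^ (n + 1 - i) := by
    intro ξ t
    have hf : (fun s => W s ξ)
        = fun τ => ξ ^ (n + 1) + ∑ i ∈ Finset.Icc 1 (n + 1), w i τ * ξ ^ (n + 1 - i) :=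
      funext fun τ => hW τ ξ
    rw [hf, deriv_poly_sum _ _ _ _ (fun i hi => (hw i hi).1)]
  -- Equation (1): u̇ᵢ = -2 vᵢ
  have eq1 : ∀ i ∈ Finset.Icc 1 n, ∀ t : ℝ, deriv (u i) t = -2 * v i t := by
    intro i hi t
    refine coeff_ext n (fun j => deriv (u j) t) (fun j => -2 * v j t) (fun ξ => ?_) i hi
    rw [← hderivU ξ t, hUt ξ t, hV t ξ, Finset.mul_sum]
    exact Finset.sum_congr rfl fun j _ => by ring
  -- Equation (3): ẇᵢ coefficients
  have eq3 : ∀ t : ℝ, ∀ i ∈ Finset.Icc 1 (n + 1), deriv (w i) t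
      = (if i ≤ n then 2 * v i t else 0) + (if 2 ≤ i then 2 * Γ t * v (i - 1) t else 0) := by
    intro t
    refine coeff_ext (n + 1) (fun j => deriv (w j) t)
      (fun j => (if j ≤ n then 2 * v j t else 0) + (if 2 ≤ j then 2 * Γ t * v (j - 1) t else 0))
      (fun ξ => ?_)
    rw [← hderivW ξ t, hWt ξ t, hV t ξ,
      show ξ + w 1 t - u 1 t = ξ + Γ t by rw [hΓ t]; ring]
    have hsplit : ∑ i ∈ Finset.Icc 1 (n + 1),
        ((if i ≤ n then 2 * v i t else 0) + (if 2 ≤ i then 2 * Γ t * v (i - 1) t else 0))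
          * ξ ^ (n + 1 - i)
        = (∑ i ∈ Finset.Icc 1 (n + 1), (if i ≤ n then 2 * v i t * ξ ^ (n + 1 - i) else 0))
          + ∑ i ∈ Finset.Icc 1 (n + 1),
              (if 2 ≤ i then 2 * Γ t * v (i - 1) t * ξ ^ (n + 1 - i) else 0) := by
      rw [← Finset.sum_add_distrib]
      exact Finset.sum_congr rfl fun i _ => by
        by_cases h1 : i ≤ n <;> by_cases h2 : 2 ≤ i <;> simp [h1, h2] <;> ring
    rw [hsplit, sum_ite_le n (fun i => 2 * v i t * ξ ^ (n + 1 - i)),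
      sum_ite_two n (fun i => 2 * Γ t * v (i - 1) t * ξ ^ (n + 1 - i))]
    have h1 : ∑ i ∈ Finset.Icc 1 n, 2 * v i t * ξ ^ (n + 1 - i)
        = (∑ i ∈ Finset.Icc 1 n, v i t * ξ ^ (n - i)) * (2 * ξ) := by
      rw [Finset.sum_mul]
      refine Finset.sum_congr rfl fun i hi => ?_
      have hle : i ≤ n := (Finset.mem_Icc.mp hi).2
      have : n + 1 - i = (n - i) + 1 := by omega
      rw [this, pow_succ]; ring
    have h2 : ∑ i ∈ Finset.Icc 1 n, 2 * Γ t * v (i + 1 - 1) t * ξ ^ (n + 1 - (i + 1))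
        = (∑ i ∈ Finset.Icc 1 n, v i t * ξ ^ (n - i)) * (2 * Γ t) := by
      rw [Finset.sum_mul]
      refine Finset.sum_congr rfl fun i hi => ?_
      have e1 : i + 1 - 1 = i := by omega
      have e2 : n + 1 - (i + 1) = n - i := by omega
      rw [e1, e2]; ring
    rw [h1, h2]; ring
  -- Equation (2): v̇ᵢ coefficients
  have eq2 : ∀ t : ℝ, ∀ i ∈ Finset.Icc 1 n, deriv (v i) t
      = -(if i + 1 ≤ n then u (i + 1) t else 0) - Γ t * u i t + w (i + 1) t := by
    intro t i hi
    have key : ∀ j ∈ Finset.Icc 1 (n + 1),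
        (if 2 ≤ j then deriv (v (j - 1)) t else 0)
        = -(if j ≤ n then u j t else 0) - (if j = 1 then Γ t else 0)
          - (if 2 ≤ j then Γ t * u (j - 1) t else 0) + w j t := by
      refine coeff_ext (n + 1) _ _ (fun ξ => ?_)
      -- LHS
      have hL : ∑ j ∈ Finset.Icc 1 (n + 1),
          (if 2 ≤ j then deriv (v (j - 1)) t else 0) * ξ ^ (n + 1 - j)
          = ∑ j ∈ Finset.Icc 1 n, deriv (v j) t * ξ ^ (n - j) := by
        have : ∀ j ∈ Finset.Icc 1 (n + 1),
            (if 2 ≤ j then deriv (v (j - 1)) t else 0) * ξ ^ (n + 1 - j)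
            = (if 2 ≤ j then deriv (v (j - 1)) t * ξ ^ (n + 1 - j) else 0) := by
          intro j _; by_cases h : 2 ≤ j <;> simp [h]
        rw [Finset.sum_congr rfl this,
          sum_ite_two n (fun j => deriv (v (j - 1)) t * ξ ^ (n + 1 - j))]
        refine Finset.sum_congr rfl fun j hj => ?_
        have e1 : j + 1 - 1 = j := by omega
        have e2 : n + 1 - (j + 1) = n - j := by omega
        rw [e1, e2]
      rw [hL, ← hderivV ξ t, hVt ξ t, hU t ξ, hW t ξ,
        show ξ + w 1 t - u 1 t = ξ + Γ t by rw [hΓ t]; ring]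
      -- RHS
      have hA : ∑ j ∈ Finset.Icc 1 n, -(u j t * ξ ^ (n + 1 - j))
          = -((∑ j ∈ Finset.Icc 1 n, u j t * ξ ^ (n - j)) * ξ) := by
        rw [Finset.sum_neg_distrib, Finset.sum_mul]
        congr 1
        refine Finset.sum_congr rfl fun j hj => ?_
        have hle : j ≤ n := (Finset.mem_Icc.mp hj).2
        have e : n + 1 - j = (n - j) + 1 := by omega
        rw [e, pow_succ]; ring
      have hB : ∑ j ∈ Finset.Icc 1 n, -(Γ t * u (j + 1 - 1) t * ξ ^ (n + 1 - (j + 1)))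
          = -((∑ j ∈ Finset.Icc 1 n, u j t * ξ ^ (n - j)) * Γ t) := by
        rw [Finset.sum_neg_distrib, Finset.sum_mul]
        congr 1
        refine Finset.sum_congr rfl fun j hj => ?_
        have e1 : j + 1 - 1 = j := by omega
        have e2 : n + 1 - (j + 1) = n - j := by omega
        rw [e1, e2]; ring
      have hsplit : ∀ j ∈ Finset.Icc 1 (n + 1),
          (-(if j ≤ n then u j t else 0) - (if j = 1 then Γ t else 0)
            - (if 2 ≤ j then Γ t * u (j - 1) t else 0) + w j t) * ξ ^ (n + 1 - j)
          = (if j ≤ n then -(u j t * ξ ^ (n + 1 - j)) else 0)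
            + (if j = 1 then -(Γ t * ξ ^ (n + 1 - j)) else 0)
            + (if 2 ≤ j then -(Γ t * u (j - 1) t * ξ ^ (n + 1 - j)) else 0)
            + w j t * ξ ^ (n + 1 - j) := by
        intro j _
        split_ifs <;> ring
      rw [Finset.sum_congr rfl hsplit, Finset.sum_add_distrib, Finset.sum_add_distrib,
        Finset.sum_add_distrib,
        sum_ite_le n (fun j => -(u j t * ξ ^ (n + 1 - j))),
        sum_ite_one n (fun j => -(Γ t * ξ ^ (n + 1 - j))),
        sum_ite_two n (fun j => -(Γ t * u (j - 1) t * ξ ^ (n + 1 - j))),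
        hA, hB, Nat.add_sub_cancel, pow_succ]
      ring
    have hmem : i + 1 ∈ Finset.Icc 1 (n + 1) := by
      simp only [Finset.mem_Icc] at hi ⊢; omega
    have hthis := key (i + 1) hmem
    have h2 : 2 ≤ i + 1 := by have := Finset.mem_Icc.mp hi; omega
    have e1 : i + 1 - 1 = i := by omega
    have e2 : ¬ (i + 1 = 1) := by simp only [Finset.mem_Icc] at hi; omega
    simp only [if_pos h2, if_neg e2, e1] at hthis
    rw [hthis]; ring
  -- function-level consequences
  have hmem1 : (1:ℕ) ∈ Finset.Icc 1 n := Finset.mem_Icc.mpr ⟨le_refl 1, hn⟩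
  have hΓf : Γ = fun t => w 1 t - u 1 t := funext hΓ
  have hw1 := hw 1 (Finset.mem_Icc.mpr ⟨le_refl 1, by omega⟩)
  have hu1 := hu 1 hmem1
  have hΓdiff : Differentiable ℝ Γ := by rw [hΓf]; exact hw1.1.sub hu1.1
  have hΓderiv : ∀ t, deriv Γ t = deriv (w 1) t - deriv (u 1) t := by
    intro t; rw [hΓf]; exact deriv_sub (hw1.1 t) (hu1.1 t)
  have hd2u : ∀ i ∈ Finset.Icc 1 n, ∀ t, deriv (deriv (u i)) t = -2 * deriv (v i) t := by
    intro i hi t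
    have hfun : deriv (u i) = fun t => -2 * v i t := funext (eq1 i hi)
    rw [hfun, deriv_const_mul _ ((hv i hi).1 t)]
  have hd3u : ∀ i ∈ Finset.Icc 1 n, ∀ t,
      deriv (deriv (deriv (u i))) t = -2 * deriv (deriv (v i)) t := by
    intro i hi t
    have hfun : deriv (deriv (u i)) = fun t => -2 * deriv (v i) t := funext (hd2u i hi)
    rw [hfun, deriv_const_mul _ ((hv i hi).2.1 t)]
  refine ⟨?_, ?_, ?_⟩
  · intro t
    have h1 := eq1 1 hmem1 t
    have h3 := eq3 t 1 (Finset.mem_Icc.mpr ⟨le_refl 1, by omega⟩)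
    rw [if_pos hn, if_neg (by norm_num)] at h3
    rw [hΓderiv t, h3, h1]; ring
  · intro i h1i hin1 t
    have hiIcc : i ∈ Finset.Icc 1 n := Finset.mem_Icc.mpr ⟨h1i, by omega⟩
    have hi1Icc : (i+1) ∈ Finset.Icc 1 n := Finset.mem_Icc.mpr ⟨by omega, by omega⟩
    have hwfun : w (i+1) = fun s => deriv (v i) s + u (i+1) s + Γ s * u i s := by
      funext s
      have h := eq2 s i hiIcc
      rw [if_pos (show i + 1 ≤ n by omega)] at h
      linear_combination -h
    have hderivw : deriv (w (i+1)) t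
        = deriv (deriv (v i)) t + deriv (u (i+1)) t
          + (deriv Γ t * u i t + Γ t * deriv (u i) t) := by
      rw [hwfun]
      exact ((((hv i hiIcc).2.1 t).hasDerivAt.add ((hu (i+1) hi1Icc).1 t).hasDerivAt).add
        ((hΓdiff t).hasDerivAt.mul ((hu i hiIcc).1 t).hasDerivAt)).deriv
    have h3 := eq3 t (i+1) (Finset.mem_Icc.mpr ⟨by omega, by omega⟩)
    rw [if_pos (show i + 1 ≤ n by omega), if_pos (show 2 ≤ i + 1 by omega),
      show i + 1 - 1 = i from by omega] at h3
    have E1 := eq1 i hiIcc t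
    have E1' := eq1 (i+1) hi1Icc t
    have E3rd := hd3u i hiIcc t
    have hcomb : deriv (deriv (v i)) t + deriv (u (i+1)) t
        + (deriv Γ t * u i t + Γ t * deriv (u i) t)
        = 2 * v (i+1) t + 2 * Γ t * v (i) t := by rw [← hderivw, h3]
    linear_combination (1/2 : ℂ) * hcomb - (1/4 : ℂ) * E3rd + (1/2 : ℂ) * E1'
      + (Γ t / 2) * E1
  · intro t
    have hnIcc : n ∈ Finset.Icc 1 n := Finset.mem_Icc.mpr ⟨hn, le_refl n⟩
    have hwfun : w (n+1) = fun s => deriv (v n) s + Γ s * u n s := by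
      funext s
      have h := eq2 s n hnIcc
      rw [if_neg (by omega)] at h
      linear_combination -h
    have hderivw : deriv (w (n+1)) t
        = deriv (deriv (v n)) t + (deriv Γ t * u n t + Γ t * deriv (u n) t) := by
      rw [hwfun]
      exact (((hv n hnIcc).2.1 t).hasDerivAt.add
        ((hΓdiff t).hasDerivAt.mul ((hu n hnIcc).1 t).hasDerivAt)).deriv
    have h3 := eq3 t (n+1) (Finset.mem_Icc.mpr ⟨by omega, le_refl _⟩)
    rw [if_neg (by omega), if_pos (show 2 ≤ n + 1 by omega),
      show n + 1 - 1 = n from by omega] at h3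
    have E1 := eq1 n hnIcc t
    have E3rd := hd3u n hnIcc t
    have hcomb : deriv (deriv (v n)) t + (deriv Γ t * u n t + Γ t * deriv (u n) t)
        = 0 + 2 * Γ t * v n t := by rw [← hderivw, h3]
    linear_combination E3rd - 2 * hcomb - 2 * Γ t * E1
end

section
/- Let n ≥ 1 and let u₁,…,u_n, v₁,…,v_n, w₁,…,w_{n+1} ∈ ℂ. In ℂ[ξ,η] set U_ξ = ξⁿ + ∑_{i=1}^{n} u_i ξ^{n−i}, V_ξ = ∑_{i=1}^{n} v_i ξ^{n−i}, W_ξ = ξ^{n+1} + ∑_{i=1}^{n+1} w_i ξ^{n+1−i}, and U_η, V_η, W_η the same polynomials in η. Then: (1) ξ − η divides 2(V_ξ U_η − U_ξ V_η), and in the quotient, viewed as a polynomial in η with coefficients in ℂ[ξ], the coefficient of η^{n−1} equals −2V_ξ; (2) ξ − η divides U_ξ W_η − W_ξ U_η, and the coefficient of η^{n−1} in (U_ξ W_η − W_ξ U_η)/(ξ − η) + U_ξ U_η equals −(ξ + w₁ − u₁)U_ξ + W_ξ; (3) ξ − η divides 2(W_ξ V_η − V_ξ W_η), and the coefficient of η^{n−1}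 in 2(W_ξ V_η − V_ξ W_η)/(ξ − η) − 2V_ξ U_η equals 2(ξ + w₁ − u₁)V_ξ. -/
open Polynomial Finset

section MumfordAux

lemma mumford_dvd_map_sub (P : Polynomial ℂ) :
    (C (X : Polynomial ℂ) - X) ∣ (C P - P.map (C : ℂ →+* Polynomial ℂ)) := by
  have h := Polynomial.X_sub_C_dvd_sub_C_eval (a := (X : Polynomial ℂ))
    (p := P.map (C : ℂ →+* Polynomial ℂ))
  rw [eval_map, eval₂_C_X] at h
  have := h.neg_right
  simpa [neg_sub] using this.neg_left

lemma mumford_quot_coeff (L Q : Polynomial (Polynomial ℂ))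
    (h : L = (C (X : Polynomial ℂ) - X) * Q) (k : ℕ) :
    Q.coeff k = X * Q.coeff (k + 1) - L.coeff (k + 1) := by
  subst h
  rw [sub_mul, Polynomial.coeff_sub, Polynomial.coeff_C_mul, Polynomial.coeff_X_mul]
  ring

lemma mumford_coeff_zero_of_rec (Q : Polynomial (Polynomial ℂ)) (d : ℕ)
    (h : ∀ k, d ≤ k → Q.coeff k = X * Q.coeff (k + 1)) :
    ∀ k, d ≤ k → Q.coeff k = 0 := by
  intro k hk
  have H : ∀ m, Q.coeff k = X ^ m * Q.coeff (k + m) := by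
    intro m
    induction m with
    | zero => simp
    | succ m ih =>
        rw [ih, h (k + m) (by omega), ← mul_assoc, ← pow_succ]
        ring_nf
  have h2 := H (Q.natDegree + 1)
  have h3 : Q.coeff (k + (Q.natDegree + 1)) = 0 :=
    Polynomial.coeff_eq_zero_of_natDegree_lt (by omega)
  rw [h3, mul_zero] at h2
  exact h2

lemma mumford_sum_coeff_eq (a : ℕ → ℂ) (m k : ℕ) (h1 : 1 ≤ k) (hk : k ≤ m) :
    (∑ i ∈ Icc 1 m, C (a i) * X ^ (m - i)).coeff (m - k) = a k := by
  rw [Polynomial.finset_sum_coeff]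
  simp only [Polynomial.coeff_C_mul, Polynomial.coeff_X_pow, mul_ite, mul_one, mul_zero]
  rw [Finset.sum_eq_single_of_mem k (by simp [Finset.mem_Icc]; omega)]
  · simp
  · intro i hi hne
    simp only [Finset.mem_Icc] at hi
    rw [if_neg (by omega)]

lemma mumford_sum_coeff_zero (a : ℕ → ℂ) (m k : ℕ) (hk : m ≤ k) :
    (∑ i ∈ Icc 1 m, C (a i) * X ^ (m - i)).coeff k = 0 := by
  rw [Polynomial.finset_sum_coeff]
  apply Finset.sum_eq_zero
  intro i hi
  simp only [Finset.mem_Icc] at hi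
  simp only [Polynomial.coeff_C_mul, Polynomial.coeff_X_pow]
  rw [if_neg (by omega), mul_zero]

end MumfordAux

/-- Polynomial identities in `ℂ[ξ][η]` (outer variable `η = X`, inner variable `ξ`,
embedded via `C`): `ξ − η` divides the Mumford brackets, and the coefficient of
`η^{n−1}` in the corresponding quotients recovers the right-hand sides of the
Neumann–Moser system. -/
theorem mumford_bracket_eta_coefficients (n : ℕ) (hn : 1 ≤ n) (u v w : ℕ → ℂ)
    (UP VP WP : Polynomial ℂ)
    (hUP : UP = X ^ n + ∑ i ∈ Finset.Icc 1 n, C (u i) * X ^ (n - i))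
    (hVP : VP = ∑ i ∈ Finset.Icc 1 n, C (v i) * X ^ (n - i))
    (hWP : WP = X ^ (n + 1) + ∑ i ∈ Finset.Icc 1 (n + 1), C (w i) * X ^ (n + 1 - i))
    (Uxi Vxi Wxi Ueta Veta Weta : Polynomial (Polynomial ℂ))
    (hUxi : Uxi = C UP) (hVxi : Vxi = C VP) (hWxi : Wxi = C WP)
    (hUeta : Ueta = UP.map (C : ℂ →+* Polynomial ℂ))
    (hVeta : Veta = VP.map (C : ℂ →+* Polynomial ℂ))
    (hWeta : Weta = WP.map (C : ℂ →+* Polynomial ℂ)) :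
    (((C (X : Polynomial ℂ) - X) ∣ 2 * (Vxi * Ueta - Uxi * Veta))
      ∧ ∀ Q : Polynomial (Polynomial ℂ),
          2 * (Vxi * Ueta - Uxi * Veta) = (C (X : Polynomial ℂ) - X) * Q →
          Q.coeff (n - 1) = -2 * VP)
    ∧ (((C (X : Polynomial ℂ) - X) ∣ (Uxi * Weta - Wxi * Ueta))
      ∧ ∀ Q : Polynomial (Polynomial ℂ),
          Uxi * Weta - Wxi * Ueta = (C (X : Polynomial ℂ) - X) * Q →
          (Q + Uxi * Ueta).coeff (n - 1) = -(X + C (w 1) - C (u 1)) * UP + WP)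
    ∧ (((C (X : Polynomial ℂ) - X) ∣ 2 * (Wxi * Veta - Vxi * Weta))
      ∧ ∀ Q : Polynomial (Polynomial ℂ),
          2 * (Wxi * Veta - Vxi * Weta) = (C (X : Polynomial ℂ) - X) * Q →
          (Q - 2 * Vxi * Ueta).coeff (n - 1) = 2 * (X + C (w 1) - C (u 1)) * VP) := by
  subst hUxi hVxi hWxi hUeta hVeta hWeta
  -- coefficient facts about UP, VP, WP
  have hU_n : UP.coeff n = 1 := by
    rw [hUP, Polynomial.coeff_add, Polynomial.coeff_X_pow, if_pos rfl,
      mumford_sum_coeff_zero u n n le_rfl, add_zero]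
  have hU_n1 : UP.coeff (n - 1) = u 1 := by
    have : n - 1 = n - 1 := rfl
    rw [hUP, Polynomial.coeff_add, Polynomial.coeff_X_pow, if_neg (by omega),
      mumford_sum_coeff_eq u n 1 le_rfl hn, zero_add]
  have hU_hi : ∀ k, n + 1 ≤ k → UP.coeff k = 0 := by
    intro k hk
    rw [hUP, Polynomial.coeff_add, Polynomial.coeff_X_pow, if_neg (by omega),
      mumford_sum_coeff_zero u n k (by omega), add_zero]
  have hV_hi : ∀ k, n ≤ k → VP.coeff k = 0 := by
    intro k hk
    rw [hVP, mumford_sum_coeff_zero v n k hk]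
  have hW_n1 : WP.coeff (n + 1) = 1 := by
    rw [hWP, Polynomial.coeff_add, Polynomial.coeff_X_pow, if_pos rfl,
      mumford_sum_coeff_zero w (n + 1) (n + 1) le_rfl, add_zero]
  have hW_n : WP.coeff n = w 1 := by
    have hs : (∑ i ∈ Icc 1 (n + 1), C (w i) * X ^ (n + 1 - i)).coeff n = w 1 := by
      simpa using mumford_sum_coeff_eq w (n + 1) 1 le_rfl (by omega)
    rw [hWP, Polynomial.coeff_add, Polynomial.coeff_X_pow, if_neg (by omega), hs, zero_add]
  have hW_hi : ∀ k, n + 2 ≤ k → WP.coeff k = 0 := by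
    intro k hk
    rw [hWP, Polynomial.coeff_add, Polynomial.coeff_X_pow, if_neg (by omega),
      mumford_sum_coeff_zero w (n + 1) k (by omega), add_zero]
  have hn1 : n - 1 + 1 = n := by omega
  refine ⟨⟨?_, ?_⟩, ⟨?_, ?_⟩, ?_, ?_⟩
  · -- divisibility 1
    have e : 2 * (C VP * UP.map (C : ℂ →+* Polynomial ℂ)
        - C UP * VP.map (C : ℂ →+* Polynomial ℂ))
        = (2 * C UP) * (C VP - VP.map (C : ℂ →+* Polynomial ℂ))
          - (2 * C VP) * (C UP - UP.map (C : ℂ →+* Polynomial ℂ)) := by ring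
    rw [e]
    exact dvd_sub ((mumford_dvd_map_sub VP).mul_left _)
      ((mumford_dvd_map_sub UP).mul_left _)
  · -- coefficient 1
    intro Q hQ
    have hrec := mumford_quot_coeff _ Q hQ
    have hLc : ∀ k, (2 * (C VP * UP.map (C : ℂ →+* Polynomial ℂ)
        - C UP * VP.map (C : ℂ →+* Polynomial ℂ))).coeff k
        = 2 * (VP * C (UP.coeff k) - UP * C (VP.coeff k)) := by
      intro k
      rw [two_mul, Polynomial.coeff_add, Polynomial.coeff_sub,
        Polynomial.coeff_C_mul, Polynomial.coeff_C_mul,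
        Polynomial.coeff_map, Polynomial.coeff_map]
      ring
    have hvan : ∀ k, n ≤ k → Q.coeff k = 0 := by
      apply mumford_coeff_zero_of_rec
      intro k hk
      rw [hrec k, hLc (k + 1), hU_hi (k + 1) (by omega), hV_hi (k + 1) (by omega)]
      simp
    have := hrec (n - 1)
    rw [hn1, hvan n le_rfl, hLc n, hU_n, hV_hi n le_rfl] at this
    rw [this]
    simp
  · -- divisibility 2
    have e : C UP * WP.map (C : ℂ →+* Polynomial ℂ)
        - C WP * UP.map (C : ℂ →+* Polynomial ℂ)
        = C WP * (C UP - UP.map (C : ℂ →+* Polynomial ℂ))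
          - C UP * (C WP - WP.map (C : ℂ →+* Polynomial ℂ)) := by ring
    rw [e]
    exact dvd_sub ((mumford_dvd_map_sub UP).mul_left _)
      ((mumford_dvd_map_sub WP).mul_left _)
  · -- coefficient 2
    intro Q hQ
    have hrec := mumford_quot_coeff _ Q hQ
    have hLc : ∀ k, (C UP * WP.map (C : ℂ →+* Polynomial ℂ)
        - C WP * UP.map (C : ℂ →+* Polynomial ℂ)).coeff k
        = UP * C (WP.coeff k) - WP * C (UP.coeff k) := by
      intro k
      rw [Polynomial.coeff_sub, Polynomial.coeff_C_mul, Polynomial.coeff_C_mul,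
        Polynomial.coeff_map, Polynomial.coeff_map]
    have hvan : ∀ k, n + 1 ≤ k → Q.coeff k = 0 := by
      apply mumford_coeff_zero_of_rec
      intro k hk
      rw [hrec k, hLc (k + 1), hU_hi (k + 1) (by omega), hW_hi (k + 1) (by omega)]
      simp
    have hQn : Q.coeff n = -UP := by
      have := hrec n
      rw [hvan (n + 1) le_rfl, hLc (n + 1), hU_hi (n + 1) le_rfl, hW_n1] at this
      rw [this]; simp
    have hQn1 : Q.coeff (n - 1) = -(X * UP) - (UP * C (w 1) - WP) := by
      have := hrec (n - 1)
      rw [hn1, hQn, hLc n, hU_n, hW_n] at this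
      rw [this]; simp
    rw [Polynomial.coeff_add, hQn1, Polynomial.coeff_C_mul, Polynomial.coeff_map, hU_n1]
    ring
  · -- divisibility 3
    have e : 2 * (C WP * VP.map (C : ℂ →+* Polynomial ℂ)
        - C VP * WP.map (C : ℂ →+* Polynomial ℂ))
        = (2 * C VP) * (C WP - WP.map (C : ℂ →+* Polynomial ℂ))
          - (2 * C WP) * (C VP - VP.map (C : ℂ →+* Polynomial ℂ)) := by ring
    rw [e]
    exact dvd_sub ((mumford_dvd_map_sub WP).mul_left _)
      ((mumford_dvd_map_sub VP).mul_left _)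
  · -- coefficient 3
    intro Q hQ
    have hrec := mumford_quot_coeff _ Q hQ
    have hLc : ∀ k, (2 * (C WP * VP.map (C : ℂ →+* Polynomial ℂ)
        - C VP * WP.map (C : ℂ →+* Polynomial ℂ))).coeff k
        = 2 * (WP * C (VP.coeff k) - VP * C (WP.coeff k)) := by
      intro k
      rw [two_mul, Polynomial.coeff_add, Polynomial.coeff_sub,
        Polynomial.coeff_C_mul, Polynomial.coeff_C_mul,
        Polynomial.coeff_map, Polynomial.coeff_map]
      ring
    have hvan : ∀ k, n + 1 ≤ k → Q.coeff k = 0 := by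
      apply mumford_coeff_zero_of_rec
      intro k hk
      rw [hrec k, hLc (k + 1), hV_hi (k + 1) (by omega), hW_hi (k + 1) (by omega)]
      simp
    have hQn : Q.coeff n = 2 * VP := by
      have := hrec n
      rw [hvan (n + 1) le_rfl, hLc (n + 1), hV_hi (n + 1) (by omega), hW_n1] at this
      rw [this]; simp
    have hQn1 : Q.coeff (n - 1) = X * (2 * VP) + 2 * (VP * C (w 1)) := by
      have := hrec (n - 1)
      rw [hn1, hQn, hLc n, hV_hi n le_rfl, hW_n] at this
      rw [this]; simp
    rw [Polynomial.coeff_sub, hQn1, mul_assoc, Polynomial.coeff_ofNat_mul,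
      Polynomial.coeff_C_mul, Polynomial.coeff_map, hU_n1]
    ring
end

section
/- Let n ≥ 1 and let u₁,…,u_n, v₁,…,v_n, w₁,…,w_{n+1} : ℂⁿ → ℂ be differentiable functions of 𝐭 = (t₁,…,t_n). Write u_ξ(𝐭) = ξⁿ + ∑_{i=1}^{n} u_i(𝐭) ξ^{n−i}, v_ξ(𝐭) = ∑_{i=1}^{n} v_i(𝐭) ξ^{n−i}, w_ξ(𝐭) = ξ^{n+1} + ∑_{i=1}^{n+1} w_i(𝐭) ξ^{n+1−i}, and 𝒟_η = ∑_{i=1}^{n} η^{n−i} ∂/∂t_i. Suppose the Mumford system holds: for all 𝐭 ∈ ℂⁿ and all ξ, η ∈ ℂ, (ξ−η)·𝒟_η u_ξ = 2(v_ξ u_η − u_ξ v_η), (ξ−η)·(𝒟_η v_ξ − u_ξ u_η) = u_ξ w_η − w_ξ u_η, and (ξ−η)·(𝒟_η w_ξ + 2 v_ξ u_η) = 2(w_ξ v_η − v_ξ w_η). Then, with ∂ = ∂/∂t₁, the functions solve the Neumann–Moser system: for all 𝐭 and all ξ ∈ ℂ, ∂u_ξ = −2v_ξ, ∂v_ξ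 = −(ξ + w₁ − u₁)u_ξ + w_ξ, and ∂w_ξ = 2(ξ + w₁ − u₁)v_ξ. -/
open Finset Polynomial

private lemma coeff_sum_ge (m : ℕ) (c : Fin (m+1) → ℂ) (k : ℕ) (hk : m + 1 ≤ k) :
    (∑ j : Fin (m+1), C (c j) * X ^ (m - (j:ℕ))).coeff k = 0 := by
  rw [finset_sum_coeff]
  refine Finset.sum_eq_zero fun j _ => ?_
  rw [coeff_C_mul, coeff_X_pow, if_neg (by have := j.isLt; omega), mul_zero]

private lemma coeff_sum_eq (m : ℕ) (c : Fin (m+1) → ℂ) :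
    (∑ j : Fin (m+1), C (c j) * X ^ (m - (j:ℕ))).coeff m = c 0 := by
  rw [finset_sum_coeff, Finset.sum_eq_single (0 : Fin (m+1))]
  · simp
  · intro j _ hj
    rw [coeff_C_mul, coeff_X_pow, if_neg, mul_zero]
    have h1 := j.isLt
    have h2 : (j:ℕ) ≠ 0 := fun h => hj (Fin.ext h)
    omega
  · simp

private lemma key (m : ℕ) (ξ : ℂ) (P Q : ℂ[X])
    (h : ∀ η : ℂ, (ξ - η) * P.eval η = Q.eval η) :
    ξ * P.coeff (m+1) - P.coeff m = Q.coeff (m+1) := by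
  have hpq : (Polynomial.C ξ - X) * P = Q := Polynomial.funext fun η => by simpa using h η
  have h2 := congrArg (fun p : ℂ[X] => p.coeff (m+1)) hpq
  simpa [sub_mul, coeff_X_mul] using h2

/-- Every solution of the Mumford dynamical system solves the Neumann–Moser system in the
first time variable `t₁` (i.e. with `∂ = ∂/∂t₁`). -/
theorem mumford_solves_neumann_moser (n : ℕ) (hn : 1 ≤ n)
    (u v : Fin n → (Fin n → ℂ) → ℂ) (w : Fin (n + 1) → (Fin n → ℂ) → ℂ)
    (hu : ∀ i, Differentiable ℂ (u i)) (hv : ∀ i, Differentiable ℂ (v i))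
    (hw : ∀ i, Differentiable ℂ (w i))
    (Uf Vf Wf : (Fin n → ℂ) → ℂ → ℂ)
    (hUf : ∀ t ξ, Uf t ξ = ξ ^ n + ∑ i : Fin n, u i t * ξ ^ (n - 1 - (i : ℕ)))
    (hVf : ∀ t ξ, Vf t ξ = ∑ i : Fin n, v i t * ξ ^ (n - 1 - (i : ℕ)))
    (hWf : ∀ t ξ, Wf t ξ = ξ ^ (n + 1) + ∑ i : Fin (n + 1), w i t * ξ ^ (n - (i : ℕ)))
    (hM1 : ∀ (t : Fin n → ℂ) (ξ η : ℂ),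
      (ξ - η) * (∑ j : Fin n, η ^ (n - 1 - (j : ℕ))
          * fderiv ℂ (fun s => Uf s ξ) t (Pi.single j 1))
        = 2 * (Vf t ξ * Uf t η - Uf t ξ * Vf t η))
    (hM2 : ∀ (t : Fin n → ℂ) (ξ η : ℂ),
      (ξ - η) * ((∑ j : Fin n, η ^ (n - 1 - (j : ℕ))
          * fderiv ℂ (fun s => Vf s ξ) t (Pi.single j 1)) - Uf t ξ * Uf t η)
        = Uf t ξ * Wf t η - Wf t ξ * Uf t η)
    (hM3 : ∀ (t : Fin n → ℂ) (ξ η : ℂ),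
      (ξ - η) * ((∑ j : Fin n, η ^ (n - 1 - (j : ℕ))
          * fderiv ℂ (fun s => Wf s ξ) t (Pi.single j 1)) + 2 * Vf t ξ * Uf t η)
        = 2 * (Wf t ξ * Vf t η - Vf t ξ * Wf t η)) :
    ∀ (t : Fin n → ℂ) (ξ : ℂ),
      fderiv ℂ (fun s => Uf s ξ) t (Pi.single (⟨0, hn⟩ : Fin n) 1) = -2 * Vf t ξ
      ∧ fderiv ℂ (fun s => Vf s ξ) t (Pi.single (⟨0, hn⟩ : Fin n) 1)
          = -(ξ + w 0 t - u (⟨0, hn⟩ : Fin n) t) * Uf t ξ + Wf t ξ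
      ∧ fderiv ℂ (fun s => Wf s ξ) t (Pi.single (⟨0, hn⟩ : Fin n) 1)
          = 2 * (ξ + w 0 t - u (⟨0, hn⟩ : Fin n) t) * Vf t ξ := by
  obtain ⟨m, rfl⟩ : ∃ m, n = m + 1 := ⟨n - 1, by omega⟩
  intro t ξ
  have hz : (⟨0, hn⟩ : Fin (m+1)) = 0 := rfl
  set a : Fin (m+1) → ℂ := fun j => fderiv ℂ (fun s => Uf s ξ) t (Pi.single j 1) with ha
  set b : Fin (m+1) → ℂ := fun j => fderiv ℂ (fun s => Vf s ξ) t (Pi.single j 1) with hb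
  set d : Fin (m+1) → ℂ := fun j => fderiv ℂ (fun s => Wf s ξ) t (Pi.single j 1) with hd
  set U : ℂ[X] := X ^ (m+1) + ∑ i : Fin (m+1), C (u i t) * X ^ (m - (i:ℕ)) with hUdef
  set V : ℂ[X] := ∑ i : Fin (m+1), C (v i t) * X ^ (m - (i:ℕ)) with hVdef
  set W : ℂ[X] := X ^ (m+2) + ∑ i : Fin (m+2), C (w i t) * X ^ (m + 1 - (i:ℕ)) with hWdef
  set A : ℂ[X] := ∑ j : Fin (m+1), C (a j) * X ^ (m - (j:ℕ)) with hAdef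
  set B : ℂ[X] := ∑ j : Fin (m+1), C (b j) * X ^ (m - (j:ℕ)) with hBdef
  set D : ℂ[X] := ∑ j : Fin (m+1), C (d j) * X ^ (m - (j:ℕ)) with hDdef
  have hUe : ∀ η, U.eval η = Uf t η := by
    intro η; simp [hUdef, hUf, eval_finset_sum]
  have hVe : ∀ η, V.eval η = Vf t η := by
    intro η; simp [hVdef, hVf, eval_finset_sum]
  have hWe : ∀ η, W.eval η = Wf t η := by
    intro η
    simp [hWdef, hWf, eval_finset_sum]
  have hAe : ∀ η, A.eval η = ∑ j : Fin (m+1), η ^ (m - (j:ℕ)) * a j := by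
    intro η
    rw [hAdef, eval_finset_sum]
    exact Finset.sum_congr rfl fun j _ => by rw [eval_mul, eval_C, eval_pow, eval_X, mul_comm]
  have hBe : ∀ η, B.eval η = ∑ j : Fin (m+1), η ^ (m - (j:ℕ)) * b j := by
    intro η
    rw [hBdef, eval_finset_sum]
    exact Finset.sum_congr rfl fun j _ => by rw [eval_mul, eval_C, eval_pow, eval_X, mul_comm]
  have hDe : ∀ η, D.eval η = ∑ j : Fin (m+1), η ^ (m - (j:ℕ)) * d j := by
    intro η
    rw [hDdef, eval_finset_sum]
    exact Finset.sum_congr rfl fun j _ => by rw [eval_mul, eval_C, eval_pow, eval_X, mul_comm]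
  -- coefficient facts
  have hU1 : U.coeff (m+1) = 1 := by
    simp [hUdef, coeff_sum_ge m _ (m+1) le_rfl]
  have hU0 : U.coeff m = u 0 t := by
    simp [hUdef, coeff_X_pow, coeff_sum_eq m (fun i => u i t)]
  have hV1 : V.coeff (m+1) = 0 := coeff_sum_ge m _ (m+1) le_rfl
  have hW1 : W.coeff (m+1) = w 0 t := by
    simp [hWdef, coeff_X_pow, coeff_sum_eq (m+1) (fun i => w i t)]
  have hA1 : A.coeff (m+1) = 0 := coeff_sum_ge m _ (m+1) le_rfl
  have hA0 : A.coeff m = a 0 := coeff_sum_eq m _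
  have hB1 : B.coeff (m+1) = 0 := coeff_sum_ge m _ (m+1) le_rfl
  have hB0 : B.coeff m = b 0 := coeff_sum_eq m _
  have hD1 : D.coeff (m+1) = 0 := coeff_sum_ge m _ (m+1) le_rfl
  have hD0 : D.coeff m = d 0 := coeff_sum_eq m _
  -- equation 1
  have k1 := key m ξ A (C 2 * (C (Vf t ξ) * U - C (Uf t ξ) * V)) (fun η => by
    rw [hAe η]
    simp only [eval_mul, eval_sub, eval_C, hUe η, hVe η]
    have := hM1 t ξ η
    simp only [Nat.add_sub_cancel] at this
    exact this)
  rw [hA1, hA0] at k1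
  simp only [coeff_C_mul, coeff_sub, hU1, hV1] at k1
  -- equation 2
  have k2 := key m ξ (B - C (Uf t ξ) * U) (C (Uf t ξ) * W - C (Wf t ξ) * U) (fun η => by
    simp only [eval_sub, eval_mul, eval_C, hUe η, hWe η, hBe η]
    have := hM2 t ξ η
    simp only [Nat.add_sub_cancel] at this
    exact this)
  simp only [coeff_sub, coeff_C_mul, hB1, hB0, hU1, hU0, hW1] at k2
  -- equation 3
  have k3 := key m ξ (D + C 2 * C (Vf t ξ) * U) (C 2 * (C (Wf t ξ) * V - C (Vf t ξ) * W)) (fun η => by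
    simp only [eval_add, eval_mul, eval_sub, eval_C, hUe η, hVe η, hWe η, hDe η]
    have := hM3 t ξ η
    simp only [Nat.add_sub_cancel] at this
    linear_combination this)
  simp only [mul_assoc, coeff_add, coeff_sub, coeff_C_mul, hD1, hD0, hU1, hU0, hV1, hW1] at k3
  refine ⟨?_, ?_, ?_⟩
  · show a ⟨0, hn⟩ = -2 * Vf t ξ
    rw [hz]; linear_combination -k1
  · show b ⟨0, hn⟩ = -(ξ + w 0 t - u ⟨0, hn⟩ t) * Uf t ξ + Wf t ξ
    rw [hz]; linear_combination -k2
  · show d ⟨0, hn⟩ = 2 * (ξ + w 0 t - u ⟨0, hn⟩ t) * Vf t ξ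
    rw [hz]; linear_combination -k3
end
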